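/- arXiv:2102.02410 — 5 statements merged into one kernel-verified Lean document; each statement's English description precedes it below -/
import Mathlib

section
/- Suppose the teacher neurons w_1*, …, w_r* ∈ ℝ^d are nonzero, Δ-separated for some Δ > 0, and the population loss satisfies L(W) = 0 for student weights W = (w_1, …, w_m). Then every nonzero student neuron matches a teacher neuron in direction: for each j ∈ [m] with w_j ≠ 0 there exists i ∈ [r] such that ∠(w_j, w_i*) = 0, i.e. w_j is a (possibly negative) scalar multiple of w_i*. -/
open MeasureTheory ProbabilityTheory Finset
open scoped Classical

noncomputable section

/-- Standard Gaussian measure `N(0, I_d)` on `ℝ^d`. -/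
def stdG (d : ℕ) : Measure (Fin d → ℝ) := Measure.pi fun _ => gaussianReal 0 1

instance (d : ℕ) : IsProbabilityMeasure (stdG d) := by
  unfold stdG; infer_instance

/-- Euclidean inner product on `ℝ^d`. -/
def dotp {d : ℕ} (w x : Fin d → ℝ) : ℝ := ∑ i, w i * x i

/-- Euclidean norm on `ℝ^d`. -/
def nrm {d : ℕ} (w : Fin d → ℝ) : ℝ := Real.sqrt (dotp w w)

/-- The angle (up to sign) between two vectors:
`∠(w,v) = arccos(|⟨w,v⟩| / (‖w‖‖v‖)) ∈ [0, π/2]`. -/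
def ang {d : ℕ} (w v : Fin d → ℝ) : ℝ := Real.arccos (|dotp w v| / (nrm w * nrm v))

/-- The teacher network `f*(x) = ∑ᵢ |⟨wᵢ*, x⟩|`. -/
def fStar {d r : ℕ} (ws : Fin r → Fin d → ℝ) (x : Fin d → ℝ) : ℝ := ∑ i, |dotp (ws i) x|

/-- The student network `f_W(x) = ∑ⱼ ‖wⱼ‖ |⟨wⱼ, x⟩|`. -/
def fStu {d m : ℕ} (W : Fin m → Fin d → ℝ) (x : Fin d → ℝ) : ℝ :=
  ∑ j, nrm (W j) * |dotp (W j) x|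

/-- The population square loss `L(W) = (1/2) E_x[(f_W(x) - f*(x))²]`. -/
def loss {d r m : ℕ} (ws : Fin r → Fin d → ℝ) (W : Fin m → Fin d → ℝ) : ℝ :=
  (1 / 2) * ∫ x, (fStu W x - fStar ws x) ^ 2 ∂(stdG d)

/-- The gradient `∇_{w_j} L(W) = E_x[R(x) ‖w_j‖ (I + w̄_j w̄_jᵀ) x · sgn(⟨w_j, x⟩)]`
(defined to be `0` when `w_j = 0`). -/
def gradL {d r m : ℕ} (ws : Fin r → Fin d → ℝ) (W : Fin m → Fin d → ℝ) (j : Fin m) :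
    Fin d → ℝ :=
  if W j = 0 then 0 else fun k =>
    ∫ x, (fStu W x - fStar ws x) * nrm (W j) *
      (x k + (W j k / nrm (W j)) * (dotp (W j) x / nrm (W j))) * Real.sign (dotp (W j) x)
      ∂(stdG d)

lemma dotp_comm {d : ℕ} (v w : Fin d → ℝ) : dotp v w = dotp w v := by
  unfold dotp; exact Finset.sum_congr rfl fun i _ => mul_comm _ _

lemma dotp_add_smul {d : ℕ} (v x w : Fin d → ℝ) (t : ℝ) :
    dotp v (x + t • w) = dotp v x + t * dotp v w := by
  unfold dotp
  simp only [Pi.add_apply, Pi.smul_apply, smul_eq_mul, mul_add, Finset.sum_add_distrib,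
    Finset.mul_sum]
  congr 1
  exact Finset.sum_congr rfl fun i _ => by ring

lemma dotp_sub_smul {d : ℕ} (v x w : Fin d → ℝ) (t : ℝ) :
    dotp v (x - t • w) = dotp v x - t * dotp v w := by
  have := dotp_add_smul v x w (-t)
  simpa [sub_eq_add_neg, neg_smul] using this

lemma dotp_smul_left {d : ℕ} (c : ℝ) (w v : Fin d → ℝ) : dotp (c • w) v = c * dotp w v := by
  unfold dotp
  simp only [Pi.smul_apply, smul_eq_mul, Finset.mul_sum, mul_assoc]

lemma dotp_zero_right {d : ℕ} (v : Fin d → ℝ) : dotp v 0 = 0 := by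
  unfold dotp; simp

lemma dotp_self_nonneg {d : ℕ} (w : Fin d → ℝ) : 0 ≤ dotp w w :=
  Finset.sum_nonneg fun i _ => mul_self_nonneg _

lemma dotp_self_pos {d : ℕ} {w : Fin d → ℝ} (hw : w ≠ 0) : 0 < dotp w w := by
  obtain ⟨i, hi⟩ : ∃ i, w i ≠ 0 := by
    by_contra h; push_neg at h; exact hw (funext h)
  exact Finset.sum_pos' (fun i _ => mul_self_nonneg _) ⟨i, Finset.mem_univ i, mul_self_pos.2 hi⟩

lemma nrm_nonneg {d : ℕ} (w : Fin d → ℝ) : 0 ≤ nrm w := Real.sqrt_nonneg _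

lemma nrm_pos {d : ℕ} {w : Fin d → ℝ} (hw : w ≠ 0) : 0 < nrm w :=
  Real.sqrt_pos.2 (dotp_self_pos hw)

lemma nrm_mul_nrm {d : ℕ} (w : Fin d → ℝ) : nrm w * nrm w = dotp w w :=
  Real.mul_self_sqrt (dotp_self_nonneg w)

lemma nrm_smul {d : ℕ} (c : ℝ) (w : Fin d → ℝ) : nrm (c • w) = |c| * nrm w := by
  unfold nrm
  rw [dotp_smul_left, dotp_comm, dotp_smul_left, ← mul_assoc]
  rw [show c * c = c ^ 2 by ring, Real.sqrt_mul (sq_nonneg c), Real.sqrt_sq_eq_abs, dotp_comm]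

-- continuity

lemma continuous_dotp {d : ℕ} (v : Fin d → ℝ) : Continuous fun x : Fin d → ℝ => dotp v x := by
  unfold dotp
  exact continuous_finset_sum _ fun i _ => continuous_const.mul (continuous_apply i)

-- the standard Gaussian projects to a 1D Gaussian

lemma map_eval_stdG (d : ℕ) (i : Fin d) :
    (stdG d).map (fun x => x i) = gaussianReal 0 1 := by
  ext s hs
  rw [Measure.map_apply (measurable_pi_apply i) hs]
  have hpre : (fun x : Fin d → ℝ => x i) ⁻¹' s
      = Set.pi Set.univ (Function.update (fun _ : Fin d => Set.univ) i s) := by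
    ext x
    simp only [Set.mem_preimage, Set.mem_pi, Set.mem_univ, forall_true_left, true_implies]
    constructor
    · intro hx j
      rcases eq_or_ne j i with h | h
      · subst h; simpa [Function.update_self] using hx
      · simp [Function.update_of_ne h]
    · intro hx; have := hx i; simpa [Function.update_self] using this
  rw [stdG, hpre, Measure.pi_pi]
  rw [Finset.prod_eq_single i]
  · simp
  · intro j _ hj
    simp [Function.update_of_ne hj]
  · simp

lemma memℒp_id_gaussian : MemLp (id : ℝ → ℝ) 2 (gaussianReal 0 1) := by
  rw [memLp_two_iff_integrable_sq aestronglyMeasurable_id]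
  rw [gaussianReal_of_var_ne_zero 0 one_ne_zero,
    integrable_withDensity_iff (measurable_gaussianPDF 0 1)
      (ae_of_all _ fun x => ENNReal.ofReal_lt_top)]
  have h : Integrable fun x : ℝ => (Real.sqrt (2 * Real.pi))⁻¹ *
      (x ^ (2:ℕ) * Real.exp (-(1/2 : ℝ) * x ^ 2)) := by
    refine Integrable.const_mul ?_ _
    have := integrable_rpow_mul_exp_neg_mul_sq (b := (1/2:ℝ)) (by norm_num) (s := 2) (by norm_num)
    have e : ∀ x : ℝ, x ^ (2:ℝ) = x ^ (2:ℕ) := fun x => by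
      rw [show (2:ℝ) = ((2:ℕ):ℝ) by norm_num, Real.rpow_natCast]
    simpa only [e] using this
  refine h.congr (ae_of_all _ fun x => ?_)
  simp only [gaussianPDF, ENNReal.toReal_ofReal (gaussianPDFReal_nonneg _ _ _), id_eq]
  unfold gaussianPDFReal
  push_cast
  rw [mul_one]
  ring_nf

lemma memℒp_eval {d : ℕ} (i : Fin d) : MemLp (fun x : Fin d → ℝ => x i) 2 (stdG d) := by
  have h1 : MemLp (id : ℝ → ℝ) 2 ((stdG d).map (fun x => x i)) := by
    rw [map_eval_stdG]; exact memℒp_id_gaussian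
  have := h1.comp_of_map (measurable_pi_apply i).aemeasurable
  simpa [Function.comp] using this

lemma memℒp_dotp {d : ℕ} (v : Fin d → ℝ) : MemLp (fun x : Fin d → ℝ => dotp v x) 2 (stdG d) := by
  unfold dotp
  exact memLp_finset_sum _ fun i _ => (memℒp_eval i).const_mul (v i)

lemma memℒp_absdot {d : ℕ} (v : Fin d → ℝ) :
    MemLp (fun x : Fin d → ℝ => |dotp v x|) 2 (stdG d) :=
  (memℒp_dotp v).abs

instance gaussianReal_isOpenPos : (gaussianReal 0 1).IsOpenPosMeasure := by
  constructor
  intro U hU hne h0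
  have hac := gaussianReal_absolutelyContinuous' 0 one_ne_zero
  exact hU.measure_ne_zero volume hne (hac h0)

instance stdG_isOpenPos (d : ℕ) : (stdG d).IsOpenPosMeasure := by
  unfold stdG; infer_instance

lemma continuous_fStar {d r : ℕ} (ws : Fin r → Fin d → ℝ) : Continuous (fStar ws) := by
  unfold fStar
  exact continuous_finset_sum _ fun i _ => (continuous_dotp (ws i)).abs

lemma continuous_fStu {d m : ℕ} (W : Fin m → Fin d → ℝ) : Continuous (fStu W) := by
  unfold fStu
  exact continuous_finset_sum _ fun j _ =>
    continuous_const.mul (continuous_dotp (W j)).abs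

lemma memℒp_fStar {d r : ℕ} (ws : Fin r → Fin d → ℝ) : MemLp (fStar ws) 2 (stdG d) := by
  unfold fStar
  exact memLp_finset_sum _ fun i _ => memℒp_absdot (ws i)

lemma memℒp_fStu {d m : ℕ} (W : Fin m → Fin d → ℝ) : MemLp (fStu W) 2 (stdG d) := by
  unfold fStu
  exact memLp_finset_sum _ fun j _ => (memℒp_absdot (W j)).const_mul (nrm (W j))

lemma eq_of_loss_zero {d r m : ℕ} (ws : Fin r → Fin d → ℝ) (W : Fin m → Fin d → ℝ)
    (hloss : loss ws W = 0) : ∀ x, fStu W x = fStar ws x := by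
  have hI : ∫ x, (fStu W x - fStar ws x) ^ 2 ∂(stdG d) = 0 := by
    unfold loss at hloss
    linarith
  have hmem : MemLp (fun x => fStu W x - fStar ws x) 2 (stdG d) :=
    (memℒp_fStu W).sub (memℒp_fStar ws)
  have hint : Integrable (fun x => (fStu W x - fStar ws x) ^ 2) (stdG d) := hmem.integrable_sq
  rw [integral_eq_zero_iff_of_nonneg (fun x => sq_nonneg _) hint] at hI
  have hae : (fun x => fStu W x - fStar ws x) =ᵐ[stdG d] (fun _ => 0) := by
    filter_upwards [hI] with x hx
    exact pow_eq_zero_iff two_ne_zero |>.1 hx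
  have heq := (Continuous.ae_eq_iff_eq (stdG d)
    ((continuous_fStu W).sub (continuous_fStar ws)) continuous_const).1 hae
  intro x
  have := congrFun heq x
  simpa [sub_eq_zero] using this

lemma exists_delta {ι : Type*} (s : Finset ι) (a b : ι → ℝ) (ha : ∀ k ∈ s, a k ≠ 0) :
    ∃ δ : ℝ, 0 < δ ∧ ∀ t : ℝ, |t| < δ → ∀ k ∈ s, |t * b k| < |a k| := by
  by_cases h : s.Nonempty
  · refine ⟨s.inf' h (fun k => |a k| / (|b k| + 1)), ?_, ?_⟩
    · rw [Finset.lt_inf'_iff]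
      intro k hk
      have := abs_pos.2 (ha k hk)
      positivity
    · intro t ht k hk
      have h1 : |t| < |a k| / (|b k| + 1) := lt_of_lt_of_le ht (Finset.inf'_le _ hk)
      have hb : (0:ℝ) < |b k| + 1 := by positivity
      have h2 : |t| * (|b k| + 1) < |a k| := (lt_div_iff₀ hb).1 h1
      have h3 : |t| * |b k| ≤ |t| * (|b k| + 1) := by
        have := abs_nonneg t; nlinarith
      rw [abs_mul]
      linarith
  · exact ⟨1, one_pos, fun t _ k hk => absurd ⟨k, hk⟩ h⟩

lemma exists_perp_generic {d : ℕ} {ι : Type*} (w : Fin d → ℝ) (s : Finset ι)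
    (q : ι → Fin d → ℝ) (h0 : ∀ k ∈ s, q k ≠ 0) (hperp : ∀ k ∈ s, dotp w (q k) = 0) :
    ∃ x, dotp w x = 0 ∧ ∀ k ∈ s, dotp (q k) x ≠ 0 := by
  classical
  induction s using Finset.induction_on with
  | empty => exact ⟨0, dotp_zero_right w, by simp⟩
  | @insert a s hnot ih =>
    obtain ⟨x, hx0, hx⟩ := ih (fun k hk => h0 k (Finset.mem_insert_of_mem hk))
      (fun k hk => hperp k (Finset.mem_insert_of_mem hk))
    by_cases hda : dotp (q a) x ≠ 0
    · refine ⟨x, hx0, fun k hk => ?_⟩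
      rcases Finset.mem_insert.1 hk with h | h
      · subst h; exact hda
      · exact hx k h
    · push_neg at hda
      obtain ⟨δ, hδ, hδ'⟩ := exists_delta s (fun k => dotp (q k) x)
        (fun k => dotp (q k) (q a)) (fun k hk => hx k hk)
      refine ⟨x + (δ/2) • q a, ?_, ?_⟩
      · rw [dotp_add_smul, hx0, hperp a (Finset.mem_insert_self a s), mul_zero, add_zero]
      · intro k hk
        rw [dotp_add_smul]
        rcases Finset.mem_insert.1 hk with h | h
        · subst h
          rw [hda, zero_add]
          have := dotp_self_pos (h0 k (Finset.mem_insert_self k s))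
          positivity
        · have hlt := hδ' (δ/2) (by rw [abs_of_pos (by positivity)]; linarith) k h
          intro hzero
          have : (δ/2) * dotp (q k) (q a) = -(dotp (q k) x) := by linarith
          rw [this, abs_neg] at hlt
          exact lt_irrefl _ hlt

lemma exists_generic {d : ℕ} {ι : Type*} {w : Fin d → ℝ} (hw : w ≠ 0) (s : Finset ι)
    (v : ι → Fin d → ℝ) (hv : ∀ k ∈ s, ∀ c : ℝ, v k ≠ c • w) :
    ∃ x, dotp w x = 0 ∧ ∀ k ∈ s, dotp (v k) x ≠ 0 := by
  set q : ι → Fin d → ℝ := fun k => v k - (dotp w (v k) / dotp w w) • w with hq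
  have hww := dotp_self_pos hw
  have h0 : ∀ k ∈ s, q k ≠ 0 := by
    intro k hk h
    exact hv k hk (dotp w (v k) / dotp w w) (sub_eq_zero.1 h)
  have hperp : ∀ k ∈ s, dotp w (q k) = 0 := by
    intro k hk
    have e : dotp w (q k) = dotp w (v k) - (dotp w (v k) / dotp w w) * dotp w w := by
      have := dotp_sub_smul w (v k) w (dotp w (v k) / dotp w w)
      simpa [hq] using this
    rw [e, div_mul_cancel₀ _ (ne_of_gt hww), sub_self]
  obtain ⟨x, hx0, hx⟩ := exists_perp_generic w s q h0 hperp
  refine ⟨x, hx0, fun k hk => ?_⟩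
  have e : dotp (v k) x = dotp (q k) x + (dotp w (v k) / dotp w w) * dotp w x := by
    rw [dotp_comm (v k) x, dotp_comm (q k) x, dotp_comm w x]
    have := dotp_sub_smul x (v k) w (dotp w (v k) / dotp w w)
    simp only [hq]
    linarith [this]
  rw [e, hx0, mul_zero, add_zero]
  exact hx k hk

lemma abs_pair_eq (a u : ℝ) (h : |u| < |a|) : |a + u| + |a + -u| = 2 * |a| := by
  have h1 : -|u| ≤ u := neg_abs_le u
  have h2 : u ≤ |u| := le_abs_self u
  rcases abs_cases a with ⟨hA, ha⟩ | ⟨hA, ha⟩ <;> rw [hA] at h ⊢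
  · rw [abs_of_pos (by linarith), abs_of_pos (by linarith)]; ring
  · rw [abs_of_neg (by linarith), abs_of_neg (by linarith)]; ring

lemma two_abs_le (a u : ℝ) : 2 * |a| ≤ |a + u| + |a + -u| := by
  have h := abs_add_le (a + u) (a + -u)
  have e : a + u + (a + -u) = 2 * a := by ring
  rw [e, abs_mul, abs_two] at h
  exact h

lemma ang_smul {d : ℕ} {u : Fin d → ℝ} (hu : u ≠ 0) {c : ℝ} (hc : c ≠ 0) :
    ang (c • u) u = 0 := by
  unfold ang
  rw [dotp_smul_left, nrm_smul, abs_mul]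
  have h1 : 0 < dotp u u := dotp_self_pos hu
  have h2 : 0 < nrm u := nrm_pos hu
  have h3 : (0:ℝ) < |c| := abs_pos.2 hc
  have e : |c| * |dotp u u| / (|c| * nrm u * nrm u) = 1 := by
    rw [abs_of_pos h1]
    rw [← nrm_mul_nrm u]
    field_simp
  rw [e, Real.arccos_one]

lemma sum_split {ι : Type*} (s : Finset ι) (n A B C : ι → ℝ) :
    ∑ k ∈ s, n k * (A k + B k - 2 * C k)
      = ((∑ k ∈ s, n k * A k) + ∑ k ∈ s, n k * B k) - 2 * ∑ k ∈ s, n k * C k := by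
  rw [Finset.mul_sum, ← Finset.sum_add_distrib, ← Finset.sum_sub_distrib]
  exact Finset.sum_congr rfl fun k _ => by ring

/-- if the teacher neurons are nonzero and Δ-separated and the population
loss is zero, then every nonzero student neuron matches some teacher neuron in direction
(it is a (possibly negative) scalar multiple of a teacher neuron). -/
theorem zero_loss_matching {d r m : ℕ} (ws : Fin r → Fin d → ℝ) (W : Fin m → Fin d → ℝ)
    (Δ : ℝ) (hΔ : 0 < Δ)
    (hne : ∀ i, ws i ≠ 0)
    (hsep : ∀ i j : Fin r, i ≠ j → Δ ≤ ang (ws i) (ws j))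
    (hloss : loss ws W = 0) :
    ∀ j : Fin m, W j ≠ 0 →
      ∃ i : Fin r, ang (W j) (ws i) = 0 ∧ ∃ c : ℝ, W j = c • ws i := by
  intro j hj
  suffices h : ∃ i, ∃ c : ℝ, W j = c • ws i by
    obtain ⟨i, c, hc⟩ := h
    have hc0 : c ≠ 0 := by rintro rfl; rw [zero_smul] at hc; exact hj hc
    exact ⟨i, by rw [hc]; exact ang_smul (hne i) hc0, c, hc⟩
  by_contra hcon
  push_neg at hcon
  have hteach : ∀ i ∈ (Finset.univ : Finset (Fin r)), ∀ c : ℝ, ws i ≠ c • W j := by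
    intro i _ c h
    have hc0 : c ≠ 0 := by rintro rfl; rw [zero_smul] at h; exact hne i h
    apply hcon i c⁻¹
    rw [h, smul_smul, inv_mul_cancel₀ hc0, one_smul]
  obtain ⟨x₀, hx0, hgen⟩ := exists_generic hj Finset.univ ws hteach
  have heq := eq_of_loss_zero ws W hloss
  obtain ⟨δ, hδ, hδ'⟩ := exists_delta (Finset.univ : Finset (Fin r))
    (fun i => dotp (ws i) x₀) (fun i => dotp (ws i) (W j))
    (fun i hi => hgen i hi)
  set t := δ / 2 with ht
  have ht0 : 0 < t := by positivity
  have htδ : |t| < δ := by rw [abs_of_pos ht0]; simp only [ht]; linarith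
  have key : ∑ j' : Fin m, nrm (W j') *
      (|dotp (W j') x₀ + t * dotp (W j') (W j)|
        + |dotp (W j') x₀ + -(t * dotp (W j') (W j))|
        - 2 * |dotp (W j') x₀|)
      = ∑ i : Fin r, (1:ℝ) *
      (|dotp (ws i) x₀ + t * dotp (ws i) (W j)|
        + |dotp (ws i) x₀ + -(t * dotp (ws i) (W j))|
        - 2 * |dotp (ws i) x₀|) := by
    rw [sum_split, sum_split]
    have h1 := heq (x₀ + t • W j)
    have h2 := heq (x₀ + (-t) • W j)
    have h3 := heq x₀
    simp only [fStu, fStar, dotp_add_smul, neg_mul] at h1 h2 h3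
    simp only [one_mul]
    linarith [h1, h2, h3]
  have hrzero : (∑ i : Fin r, (1:ℝ) *
      (|dotp (ws i) x₀ + t * dotp (ws i) (W j)|
        + |dotp (ws i) x₀ + -(t * dotp (ws i) (W j))|
        - 2 * |dotp (ws i) x₀|)) = 0 := by
    refine Finset.sum_eq_zero fun i _ => ?_
    rw [one_mul]
    have hlt := hδ' t htδ i (Finset.mem_univ i)
    have := abs_pair_eq (dotp (ws i) x₀) (t * dotp (ws i) (W j)) hlt
    linarith
  rw [hrzero] at key
  have hnonneg : ∀ j' ∈ (Finset.univ : Finset (Fin m)), 0 ≤ nrm (W j') *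
      (|dotp (W j') x₀ + t * dotp (W j') (W j)|
        + |dotp (W j') x₀ + -(t * dotp (W j') (W j))|
        - 2 * |dotp (W j') x₀|) := by
    intro j' _
    have := two_abs_le (dotp (W j') x₀) (t * dotp (W j') (W j))
    have := nrm_nonneg (W j')
    nlinarith
  have hterm := (Finset.sum_eq_zero_iff_of_nonneg hnonneg).1 key j (Finset.mem_univ j)
  rw [hx0] at hterm
  have hc : 0 < dotp (W j) (W j) := dotp_self_pos hj
  have hn : 0 < nrm (W j) := nrm_pos hj
  have e1 : |(0:ℝ) + t * dotp (W j) (W j)| = t * dotp (W j) (W j) := by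
    rw [zero_add, abs_of_pos (by positivity)]
  have e2 : |(0:ℝ) + -(t * dotp (W j) (W j))| = t * dotp (W j) (W j) := by
    rw [zero_add, abs_neg, abs_of_pos (by positivity)]
  rw [e1, e2, abs_zero] at hterm
  nlinarith [hterm, mul_pos ht0 hc]
end
end

section
/- There exist d, r, m ≥ 1, nonzero teacher neurons w_1*, …, w_r* ∈ ℝ^d and student neurons w_1, …, w_m ∈ ℝ^d such that E_{x ~ N(0, I_d)}[(Σ_{j=1}^m ‖w_j‖·ReLU(⟨w_j, x⟩) − Σ_{i=1}^r ReLU(⟨w_i*, x⟩))²] = 0, yet some nonzero student neuron w_j is not a positive scalar multiple of any teacher neuron w_i*. (For example, one may take any teacher with Σ_{i=1}^r w_i* = 0 and students satisfying ‖w_j‖ w_j = −w_j* for j ∈ [r].) -/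
open MeasureTheory ProbabilityTheory Finset
open scoped Classical

noncomputable section

/-- ReLU activation. -/
def relu (t : ℝ) : ℝ := max t 0

lemma relu_neg_sub (t : ℝ) : relu (-t) - relu t = -t := by
  simp [relu, max_def]; split_ifs <;> linarith

/-- with ReLU activation, zero loss does not imply student-teacher matching:
there is an instance with zero population loss where some nonzero student neuron is not a
positive multiple of any teacher neuron. -/
theorem relu_zero_loss_no_matching :
    ∃ (d r m : ℕ), 1 ≤ d ∧ 1 ≤ r ∧ 1 ≤ m ∧
    ∃ (ws : Fin r → Fin d → ℝ) (W : Fin m → Fin d → ℝ),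
      (∀ i, ws i ≠ 0) ∧
      (∫ x, (∑ j, nrm (W j) * relu (dotp (W j) x) - ∑ i, relu (dotp (ws i) x)) ^ 2
          ∂(stdG d)) = 0 ∧
      ∃ j : Fin m, W j ≠ 0 ∧ ∀ (i : Fin r) (c : ℝ), 0 < c → W j ≠ c • ws i := by
  have hs3 : (0:ℝ) < Real.sqrt 3 := Real.sqrt_pos.2 (by norm_num)
  set s : ℝ := Real.sqrt 3 / 2 with hsdef
  have hs : 0 < s := by positivity
  have hs2 : s ^ 2 = 3 / 4 := by
    rw [hsdef, div_pow, Real.sq_sqrt (by norm_num : (3:ℝ) ≥ 0)]; norm_num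
  set ws : Fin 3 → Fin 2 → ℝ := ![![1, 0], ![-1/2, s], ![-1/2, -s]] with hws
  refine ⟨2, 3, 3, by norm_num, by norm_num, by norm_num, ws, fun j => -(ws j), ?_, ?_, ?_⟩
  · intro i
    fin_cases i
    · intro h; have h0 := congrFun h 0; simp [hws] at h0
    · intro h; have h1 := congrFun h 1; simp [hws] at h1; exact hs.ne' h1
    · intro h; have h1 := congrFun h 1; simp [hws] at h1; exact hs.ne' h1
  · have hnrm : ∀ j : Fin 3, nrm (-(ws j)) = 1 := by
      intro j
      have : dotp (-(ws j)) (-(ws j)) = 1 := by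
        fin_cases j <;> simp [dotp, Fin.sum_univ_two, hws] <;> nlinarith [hs2]
      rw [nrm, this, Real.sqrt_one]
    have hpt : ∀ x : Fin 2 → ℝ,
        (∑ j, nrm (-(ws j)) * relu (dotp (-(ws j)) x) - ∑ i, relu (dotp (ws i) x)) = 0 := by
      intro x
      have hneg : ∀ j : Fin 3, dotp (-(ws j)) x = -(dotp (ws j) x) := by
        intro j; simp [dotp, Fin.sum_univ_two]; try ring
      have hsum : ∑ i : Fin 3, dotp (ws i) x = 0 := by
        rw [hws]
        simp only [dotp, Fin.sum_univ_two, Fin.sum_univ_three, Matrix.cons_val_zero,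
          Matrix.cons_val_one, Matrix.head_cons, Matrix.cons_val_two, Matrix.tail_cons]
        ring
      calc ∑ j, nrm (-(ws j)) * relu (dotp (-(ws j)) x) - ∑ i, relu (dotp (ws i) x)
          = ∑ i : Fin 3, (relu (-(dotp (ws i) x)) - relu (dotp (ws i) x)) := by
            rw [Finset.sum_sub_distrib]
            congr 1
            exact Finset.sum_congr rfl fun j _ => by rw [hnrm, hneg, one_mul]
        _ = ∑ i : Fin 3, -(dotp (ws i) x) := by
            exact Finset.sum_congr rfl fun i _ => relu_neg_sub _
        _ = 0 := by rw [Finset.sum_neg_distrib, hsum, neg_zero]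
    calc (∫ x, (∑ j, nrm (-(ws j)) * relu (dotp (-(ws j)) x)
            - ∑ i, relu (dotp (ws i) x)) ^ 2 ∂(stdG 2))
        = ∫ x, (0:ℝ) ∂(stdG 2) := by
          refine integral_congr_ae (Filter.Eventually.of_forall fun x => ?_)
          simp only
          rw [hpt x]; ring
      _ = 0 := integral_zero _ _
  · refine ⟨0, ?_, ?_⟩
    · intro h
      have := congrFun h 0
      simp [hws] at this
    · intro i c hc h
      have h0 := congrFun h 0
      have h1 := congrFun h 1
      fin_cases i
      · simp [hws] at h0; nlinarith
      · simp [hws] at h0 h1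
        rcases h1 with h1 | h1
        · exact hc.ne' h1
        · exact hs.ne' h1
      · simp [hws] at h0 h1
        rcases h1 with h1 | h1
        · exact hc.ne' h1
        · exact hs.ne' h1
end
end

section
/- Let w* ∈ ℝ² be a unit vector, u ∈ ℝ² a unit vector orthogonal to w*, and for δ ∈ (0, π/2) set ρ = (2 cos δ)^{-1/2}, w_1 = ρ(cos δ · w* + sin δ · u) and w_2 = ρ(cos δ · w* − sin δ · u) (so ‖w_1‖ w_1 + ‖w_2‖ w_2 = w*, ∠(w_1, w*) = ∠(w_2, w*) = δ). Then there exist absolute constants c_1, c_2, δ_0 > 0 such that for all 0 < δ ≤ δ_0, the loss L(W) for the student (w_1, w_2) against the single teacher neuron w* satisfies c_1 δ³ ≤ L(W) ≤ c_2 δ³. -/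
open MeasureTheory ProbabilityTheory Finset
open scoped Classical

noncomputable section

section Aux
open Real
open scoped ENNReal NNReal

def phi (p : ℝ) : ℝ := (Real.sqrt (2*Real.pi))⁻¹ * Real.exp (-p^2/2)

lemma phi_pos (p : ℝ) : 0 < phi p := by unfold phi; positivity

lemma phi_eq : gaussianPDFReal 0 1 = phi := by
  ext p; simp [gaussianPDFReal, phi]

lemma gauss_eq : gaussianReal 0 1 = volume.withDensity (fun p => ENNReal.ofReal (phi p)) := by
  rw [gaussianReal_of_var_ne_zero 0 one_ne_zero]
  congr 1; funext p; rw [gaussianPDF_def, phi_eq]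

lemma integral_gauss (g : ℝ → ℝ) :
    ∫ p, g p ∂(gaussianReal 0 1) = ∫ p, phi p * g p := by
  rw [gauss_eq]
  have hm : Measurable fun p => (phi p).toNNReal := by
    apply Measurable.real_toNNReal; unfold phi; fun_prop
  have : (fun p => ENNReal.ofReal (phi p)) = (fun p => ((phi p).toNNReal : ℝ≥0∞)) := rfl
  rw [this, integral_withDensity_eq_integral_smul hm]
  congr 1; funext p
  simp [NNReal.smul_def, Real.coe_toNNReal _ (phi_pos p).le]

lemma integrable_gauss_iff (g : ℝ → ℝ) :
    Integrable g (gaussianReal 0 1) ↔ Integrable (fun p => g p * phi p) volume := by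
  rw [gauss_eq]
  rw [integrable_withDensity_iff (by unfold phi; fun_prop) (by simp [ENNReal.ofReal_lt_top])]
  simp only [ENNReal.toReal_ofReal (phi_pos _).le]

lemma gauss_prod_eq :
    (gaussianReal 0 1).prod (gaussianReal 0 1) =
      ((volume : Measure ℝ).prod volume).withDensity
        (fun z => ENNReal.ofReal (phi z.1 * phi z.2)) := by
  have hphi : Measurable fun p : ℝ => ENNReal.ofReal (phi p) := by
    apply Measurable.ennreal_ofReal; unfold phi; fun_prop
  refine (Measure.prod_eq fun s t hs ht => ?_)
  rw [withDensity_apply _ (hs.prod ht), ← Measure.prod_restrict]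
  have : ∀ z : ℝ × ℝ, ENNReal.ofReal (phi z.1 * phi z.2)
      = ENNReal.ofReal (phi z.1) * ENNReal.ofReal (phi z.2) := by
    intro z; rw [ENNReal.ofReal_mul (phi_pos _).le]
  simp only [this]
  rw [lintegral_prod_mul (hphi.aemeasurable) (hphi.aemeasurable)]
  rw [gauss_eq, withDensity_apply _ hs, withDensity_apply _ ht]

lemma map_withDensity_equiv {α β : Type*} [MeasurableSpace α] [MeasurableSpace β]
    (e : α ≃ᵐ β) (μ : Measure α) (f : β → ℝ≥0∞) (hf : Measurable f) :
    (μ.withDensity (fun x => f (e x))).map e = (μ.map e).withDensity f := by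
  ext s hs
  rw [Measure.map_apply e.measurable hs, withDensity_apply _ hs,
    withDensity_apply _ (e.measurable hs), setLIntegral_map hs hf e.measurable]

lemma stdG_two_eq : stdG 2 = (volume : Measure (Fin 2 → ℝ)).withDensity
    (fun x => ENNReal.ofReal (phi (x 0) * phi (x 1))) := by
  have hD : Measurable fun z : ℝ × ℝ => ENNReal.ofReal (phi z.1 * phi z.2) := by
    apply Measurable.ennreal_ofReal; unfold phi; fun_prop
  have h1 := map_withDensity_equiv (MeasurableEquiv.finTwoArrow (α := ℝ))
    (volume : Measure (Fin 2 → ℝ)) _ hD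
  have h2 : (volume : Measure (Fin 2 → ℝ)).map MeasurableEquiv.finTwoArrow
      = (volume : Measure ℝ).prod volume := by
    rw [← MeasureTheory.Measure.volume_eq_prod]
    exact (volume_preserving_finTwoArrow ℝ).map_eq
  have h3 : (stdG 2).map MeasurableEquiv.finTwoArrow
      = (gaussianReal 0 1).prod (gaussianReal 0 1) :=
    (measurePreserving_finTwoArrow (gaussianReal 0 1)).map_eq
  have h4 : ((volume : Measure (Fin 2 → ℝ)).withDensity
      (fun x => ENNReal.ofReal (phi (x 0) * phi (x 1)))).map MeasurableEquiv.finTwoArrow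
      = (stdG 2).map MeasurableEquiv.finTwoArrow := by
    rw [h3, gauss_prod_eq, ← h2, ← h1]
    congr 1
  have h5 := congrArg (fun μ => Measure.map (MeasurableEquiv.finTwoArrow (α := ℝ)).symm μ) h4
  simp only [MeasurableEquiv.map_symm_map] at h5
  exact h5.symm

lemma integral_stdG (g : (Fin 2 → ℝ) → ℝ) :
    ∫ x, g x ∂(stdG 2) = ∫ x, (phi (x 0) * phi (x 1)) * g x := by
  rw [stdG_two_eq]
  have hm : Measurable fun x : Fin 2 → ℝ => (phi (x 0) * phi (x 1)).toNNReal := by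
    apply Measurable.real_toNNReal; unfold phi; fun_prop
  have : (fun x : Fin 2 → ℝ => ENNReal.ofReal (phi (x 0) * phi (x 1)))
      = (fun x => ((phi (x 0) * phi (x 1)).toNNReal : ℝ≥0∞)) := rfl
  rw [this, integral_withDensity_eq_integral_smul hm]
  congr 1; funext x
  simp [NNReal.smul_def, Real.coe_toNNReal _ (mul_nonneg (phi_pos _).le (phi_pos _).le)]

lemma integral_stdG_pair (F : ℝ × ℝ → ℝ) :
    ∫ x, F (x 0, x 1) ∂(stdG 2) = ∫ z, F z ∂((gaussianReal 0 1).prod (gaussianReal 0 1)) := by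
  have h := (measurePreserving_finTwoArrow (α := ℝ) (gaussianReal 0 1)).integral_comp'
    (f := MeasurableEquiv.finTwoArrow) F
  rw [← h]
  simp [MeasurableEquiv.finTwoArrow_apply, stdG]

lemma rot_integral (w0 w1 u0 u1 : ℝ) (hw : w0^2 + w1^2 = 1) (hu : u0^2 + u1^2 = 1)
    (ho : w0*u0 + w1*u1 = 0) (F : ℝ × ℝ → ℝ) (hF : Continuous F) :
    ∫ x, F (w0 * x 0 + w1 * x 1, u0 * x 0 + u1 * x 1) ∂(stdG 2)
      = ∫ z, F z ∂((gaussianReal 0 1).prod (gaussianReal 0 1)) := by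
  set A : Matrix (Fin 2) (Fin 2) ℝ := !![w0, w1; u0, u1] with hA
  set M : (Fin 2 → ℝ) →ₗ[ℝ] (Fin 2 → ℝ) := Matrix.toLin' A with hM
  have hM0 : ∀ x : Fin 2 → ℝ, M x 0 = w0 * x 0 + w1 * x 1 := by
    intro x
    simp [hM, hA, Matrix.toLin'_apply, Matrix.mulVec, dotProduct, Fin.sum_univ_two]
  have hM1 : ∀ x : Fin 2 → ℝ, M x 1 = u0 * x 0 + u1 * x 1 := by
    intro x
    simp [hM, hA, Matrix.toLin'_apply, Matrix.mulVec, dotProduct, Fin.sum_univ_two]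
  have hdet : LinearMap.det M = w0 * u1 - w1 * u0 := by
    rw [hM, LinearMap.det_toLin']
    simp [hA, Matrix.det_fin_two]
  have hdetsq : (w0 * u1 - w1 * u0)^2 = 1 := by nlinarith [sq_nonneg (w0*u1 - w1*u0)]
  have habs : |LinearMap.det M| = 1 := by
    rw [hdet]
    rcases abs_cases (w0 * u1 - w1 * u0) with ⟨h1, _⟩ | ⟨h1, _⟩ <;> nlinarith
  have hdet_ne : LinearMap.det M ≠ 0 := by
    intro h; rw [h] at habs; simp at habs
  have hmap : Measure.map M volume = volume := by
    rw [Real.map_linearMap_volume_pi_eq_smul_volume_pi hdet_ne, abs_inv, habs]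
    simp
  have hMcont : Continuous M := M.continuous_of_finiteDimensional
  set G : (Fin 2 → ℝ) → ℝ := fun y => (phi (y 0) * phi (y 1)) * F (y 0, y 1) with hG
  have hGcont : Continuous G := by
    apply Continuous.mul
    · apply Continuous.mul <;> · unfold phi; fun_prop
    · exact hF.comp (by fun_prop)
  have key : ∀ x : Fin 2 → ℝ,
      (phi (x 0) * phi (x 1)) * F (w0 * x 0 + w1 * x 1, u0 * x 0 + u1 * x 1) = G (M x) := by
    intro x
    rw [hG]
    simp only [hM0, hM1]
    obtain ⟨s, hs, hu0, hu1⟩ : ∃ s : ℝ, s^2 = 1 ∧ u0 = -s*w1 ∧ u1 = s*w0 :=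
      ⟨w0 * u1 - w1 * u0, hdetsq, by linear_combination -u0*hw + w0*ho,
        by linear_combination -u1*hw + w1*ho⟩
    have hsum : (w0 * x 0 + w1 * x 1)^2 + (u0 * x 0 + u1 * x 1)^2 = (x 0)^2 + (x 1)^2 := by
      rw [hu0, hu1]
      linear_combination (w0 * x 1 - w1 * x 0)^2 * hs + ((x 0)^2 + (x 1)^2) * hw
    have hphi : phi (w0 * x 0 + w1 * x 1) * phi (u0 * x 0 + u1 * x 1)
        = phi (x 0) * phi (x 1) := by
      unfold phi
      rw [mul_mul_mul_comm, ← Real.exp_add, mul_mul_mul_comm, ← Real.exp_add]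
      congr 1
      rw [Real.exp_eq_exp]
      linarith [hsum]
    rw [hphi]
  rw [integral_stdG]
  simp only [key]
  have : ∫ x, G (M x) = ∫ y, G y := by
    have := integral_map (μ := (volume : Measure (Fin 2 → ℝ))) (φ := fun x => M x)
      (f := G) (hMcont.aemeasurable) (by rw [show Measure.map (fun x => M x) volume = volume from hmap]; exact hGcont.aestronglyMeasurable)
    rw [show Measure.map (fun x => M x) volume = volume from hmap] at this
    exact this.symm
  rw [this, hG]
  rw [← integral_stdG (fun y => F (y 0, y 1)), integral_stdG_pair]

lemma abs_add_abs_sub (A B : ℝ) : |A + B| + |A - B| = 2 * max |A| |B| := by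
  rcases abs_cases A with ⟨h1, h1'⟩ | ⟨h1, h1'⟩ <;>
  rcases abs_cases B with ⟨h2, h2'⟩ | ⟨h2, h2'⟩ <;>
  rcases abs_cases (A + B) with ⟨h3, h3'⟩ | ⟨h3, h3'⟩ <;>
  rcases abs_cases (A - B) with ⟨h4, h4'⟩ | ⟨h4, h4'⟩ <;>
  rcases max_cases |A| |B| with ⟨h5, h5'⟩ | ⟨h5, h5'⟩ <;>
  linarith

lemma max_sub_self (a b : ℝ) : max a b - a = max 0 (b - a) := by
  rcases max_cases a b with ⟨h1, h1'⟩ | ⟨h1, h1'⟩ <;>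
  rcases max_cases (0:ℝ) (b - a) with ⟨h2, h2'⟩ | ⟨h2, h2'⟩ <;>
  linarith

lemma interval_sq (a : ℝ) (ha : 0 ≤ a) :
    ∫ p in (-a)..a, (a - |p|)^2 = 2/3 * a^3 := by
  have hsplit : ∫ p in (-a)..a, (a - |p|)^2
      = (∫ p in (-a)..(0:ℝ), (a - |p|)^2) + ∫ p in (0:ℝ)..a, (a - |p|)^2 := by
    rw [intervalIntegral.integral_add_adjacent_intervals] <;>
    · apply Continuous.intervalIntegrable; fun_prop
  have h1 : ∫ p in (-a)..(0:ℝ), (a - |p|)^2 = ∫ p in (-a)..(0:ℝ), (a + p)^2 := by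
    apply intervalIntegral.integral_congr
    intro p hp
    rw [Set.uIcc_of_le (by linarith : -a ≤ 0)] at hp
    simp only []
    rw [abs_of_nonpos hp.2]; ring_nf
  have h2 : ∫ p in (0:ℝ)..a, (a - |p|)^2 = ∫ p in (0:ℝ)..a, (a - p)^2 := by
    apply intervalIntegral.integral_congr
    intro p hp
    rw [Set.uIcc_of_le ha] at hp
    simp only []
    rw [abs_of_nonneg hp.1]
  have h3 : ∫ p in (-a)..(0:ℝ), (a + p)^2 = a^3/3 := by
    have := intervalIntegral.integral_comp_add_left (a := -a) (b := (0:ℝ))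
      (fun x => x^2) a
    rw [this]
    norm_num [integral_pow]
  have h4 : ∫ p in (0:ℝ)..a, (a - p)^2 = a^3/3 := by
    have := intervalIntegral.integral_comp_sub_left (a := (0:ℝ)) (b := a)
      (fun x => x^2) a
    rw [this]
    norm_num [integral_pow]
  rw [hsplit, h1, h2, h3, h4]; ring

lemma J_eq (a : ℝ) (ha : 0 ≤ a) :
    ∫ p, (max 0 (a - |p|))^2 ∂(gaussianReal 0 1)
      = ∫ p in (-a)..a, phi p * (max 0 (a - |p|))^2 := by
  rw [integral_gauss]
  have hsupp : ∀ p, p ∉ Set.Icc (-a) a → phi p * (max 0 (a - |p|))^2 = 0 := by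
    intro p hp
    simp only [Set.mem_Icc, not_and_or, not_le] at hp
    have : a - |p| ≤ 0 := by rcases hp with h | h <;> rcases abs_cases p with ⟨h2, _⟩ | ⟨h2, _⟩ <;> linarith
    rw [max_eq_left this]
    simp
  rw [← setIntegral_eq_integral_of_forall_compl_eq_zero hsupp,
    integral_Icc_eq_integral_Ioc, ← intervalIntegral.integral_of_le (by linarith : -a ≤ a)]

lemma J_cont (a : ℝ) : Continuous (fun p => phi p * (max 0 (a - |p|))^2) := by
  apply Continuous.mul
  · unfold phi; fun_prop
  · fun_prop

lemma J_upper (a : ℝ) (ha : 0 ≤ a) :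
    ∫ p, (max 0 (a - |p|))^2 ∂(gaussianReal 0 1)
      ≤ (Real.sqrt (2*Real.pi))⁻¹ * (2/3 * a^3) := by
  rw [J_eq a ha]
  have h1 : ∫ p in (-a)..a, phi p * (max 0 (a - |p|))^2
      ≤ ∫ p in (-a)..a, (Real.sqrt (2*Real.pi))⁻¹ * (a - |p|)^2 := by
    apply intervalIntegral.integral_mono_on (by linarith)
    · exact (J_cont a).intervalIntegrable _ _
    · apply Continuous.intervalIntegrable; fun_prop
    · intro p hp
      have hple : |p| ≤ a := by
        rw [abs_le]; exact ⟨hp.1, hp.2⟩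
      have hmax : max 0 (a - |p|) = a - |p| := max_eq_right (by linarith)
      rw [hmax]
      apply mul_le_mul_of_nonneg_right _ (sq_nonneg _)
      unfold phi
      have : Real.exp (-p^2/2) ≤ 1 := by
        rw [Real.exp_le_one_iff]
        nlinarith [sq_nonneg p]
      nlinarith [Real.sqrt_pos.mpr (by positivity : (0:ℝ) < 2*Real.pi), this,
        inv_pos.mpr (Real.sqrt_pos.mpr (by positivity : (0:ℝ) < 2*Real.pi))]
  calc _ ≤ _ := h1
    _ = (Real.sqrt (2*Real.pi))⁻¹ * (2/3 * a^3) := by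
        rw [intervalIntegral.integral_const_mul, interval_sq a ha]

lemma J_lower (a : ℝ) (ha : 0 ≤ a) (ha2 : a ≤ 2) :
    Real.exp (-2) * (Real.sqrt (2*Real.pi))⁻¹ * (2/3 * a^3)
      ≤ ∫ p, (max 0 (a - |p|))^2 ∂(gaussianReal 0 1) := by
  rw [J_eq a ha]
  have h1 : ∫ p in (-a)..a, (Real.exp (-2) * (Real.sqrt (2*Real.pi))⁻¹) * (a - |p|)^2
      ≤ ∫ p in (-a)..a, phi p * (max 0 (a - |p|))^2 := by
    apply intervalIntegral.integral_mono_on (by linarith)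
    · apply Continuous.intervalIntegrable; fun_prop
    · exact (J_cont a).intervalIntegrable _ _
    · intro p hp
      have hple : |p| ≤ a := by rw [abs_le]; exact ⟨hp.1, hp.2⟩
      have hmax : max 0 (a - |p|) = a - |p| := max_eq_right (by linarith)
      rw [hmax]
      apply mul_le_mul_of_nonneg_right _ (sq_nonneg _)
      unfold phi
      rw [mul_comm]
      apply mul_le_mul_of_nonneg_left _ (by positivity)
      apply Real.exp_le_exp.mpr
      nlinarith [abs_nonneg p, sq_abs p]
  calc Real.exp (-2) * (Real.sqrt (2*Real.pi))⁻¹ * (2/3 * a^3)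
      = ∫ p in (-a)..a, (Real.exp (-2) * (Real.sqrt (2*Real.pi))⁻¹) * (a - |p|)^2 := by
        rw [intervalIntegral.integral_const_mul, interval_sq a ha]
    _ ≤ _ := h1

lemma integrable_expq : Integrable (fun q => Real.exp (q^2/4)) (gaussianReal 0 1) := by
  rw [integrable_gauss_iff]
  have : (fun q : ℝ => Real.exp (q^2/4) * phi q)
      = (fun q => (Real.sqrt (2*Real.pi))⁻¹ * Real.exp (-(1/4) * q^2)) := by
    funext q
    unfold phi
    rw [mul_comm, mul_assoc, ← Real.exp_add]
    congr 2
    ring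
  rw [this]
  exact (integrable_exp_neg_mul_sq (by norm_num : (0:ℝ) < 1/4)).const_mul _

lemma abs_cube_le (q : ℝ) : |q|^3 ≤ 1728 * Real.exp (q^2/4) := by
  have hexp1 : (1:ℝ) ≤ Real.exp (q^2/4) := by
    rw [Real.one_le_exp_iff]; positivity
  rcases le_total (|q|) 1 with h | h
  · have : |q|^3 ≤ 1 := by
      calc |q|^3 ≤ 1^3 := by apply pow_le_pow_left₀ (abs_nonneg q) h
        _ = 1 := by norm_num
    linarith
  · have h6 : |q|^3 ≤ |q|^6 := by
      apply pow_le_pow_right₀ h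
      norm_num
    have hq6 : |q|^6 = (q^2)^3 := by
      rw [← sq_abs]; ring
    have hexp : q^2/12 ≤ Real.exp (q^2/12) := by
      linarith [Real.add_one_le_exp (q^2/12), le_of_lt (by positivity : (0:ℝ) < 1)]
    have h3 : (q^2/12)^3 ≤ (Real.exp (q^2/12))^3 := by
      apply pow_le_pow_left₀ (by positivity) hexp
    have hexp3 : (Real.exp (q^2/12))^3 = Real.exp (q^2/4) := by
      rw [← Real.exp_nat_mul]
      congr 1; ring
    calc |q|^3 ≤ |q|^6 := h6
      _ = (q^2)^3 := hq6
      _ = 1728 * (q^2/12)^3 := by ring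
      _ ≤ 1728 * Real.exp (q^2/4) := by
          rw [← hexp3]
          linarith [h3]

lemma sq_le_exp (q : ℝ) : q^2 ≤ 4 * Real.exp (q^2/4) := by
  have := Real.add_one_le_exp (q^2/4)
  nlinarith [Real.exp_pos (q^2/4)]

lemma integrable_abs_cube : Integrable (fun q => |q|^3) (gaussianReal 0 1) := by
  apply Integrable.mono (integrable_expq.const_mul 1728)
  · apply Continuous.aestronglyMeasurable; fun_prop
  · apply Filter.Eventually.of_forall
    intro q
    rw [norm_eq_abs, norm_eq_abs, abs_of_nonneg (by positivity : (0:ℝ) ≤ |q|^3),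
      abs_of_nonneg (by positivity : (0:ℝ) ≤ 1728 * Real.exp (q^2/4))]
    exact abs_cube_le q

lemma integrable_sq_gauss : Integrable (fun q : ℝ => q^2) (gaussianReal 0 1) := by
  apply Integrable.mono (integrable_expq.const_mul 4)
  · apply Continuous.aestronglyMeasurable; fun_prop
  · apply Filter.Eventually.of_forall
    intro q
    rw [norm_eq_abs, norm_eq_abs, abs_of_nonneg (sq_nonneg q),
      abs_of_nonneg (by positivity : (0:ℝ) ≤ 4 * Real.exp (q^2/4))]
    exact sq_le_exp q

lemma integral_expq_le : ∫ q, Real.exp (q^2/4) ∂(gaussianReal 0 1) ≤ 4 := by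
  rw [integral_gauss]
  have : (fun q : ℝ => phi q * Real.exp (q^2/4))
      = (fun q => (Real.sqrt (2*Real.pi))⁻¹ * Real.exp (-(1/4) * q^2)) := by
    funext q
    unfold phi
    rw [mul_assoc, ← Real.exp_add]
    congr 2
    ring
  rw [this, MeasureTheory.integral_const_mul, integral_gaussian]
  have h1 : Real.sqrt (Real.pi / (1/4)) ≤ 4 := by
    rw [show Real.pi / (1/4) = 4 * Real.pi by ring]
    calc Real.sqrt (4 * Real.pi) ≤ Real.sqrt 16 := by
          apply Real.sqrt_le_sqrt
          nlinarith [Real.pi_le_four]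
      _ = 4 := by
          rw [show (16:ℝ) = 4^2 by norm_num, Real.sqrt_sq (by norm_num : (0:ℝ) ≤ 4)]
  have h2 : (Real.sqrt (2*Real.pi))⁻¹ ≤ 1 := by
    rw [inv_le_one_iff₀]
    right
    rw [show (1:ℝ) = Real.sqrt 1 by simp]
    apply Real.sqrt_le_sqrt
    nlinarith [Real.pi_gt_three]
  calc (Real.sqrt (2*Real.pi))⁻¹ * Real.sqrt (Real.pi / (1/4)) ≤ 1 * 4 := by
        apply mul_le_mul h2 h1 (Real.sqrt_nonneg _) (by norm_num)
    _ = 4 := by norm_num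

lemma integral_abs_cube_le : ∫ q, |q|^3 ∂(gaussianReal 0 1) ≤ 6912 := by
  calc ∫ q, |q|^3 ∂(gaussianReal 0 1) ≤ ∫ q, 1728 * Real.exp (q^2/4) ∂(gaussianReal 0 1) := by
        apply integral_mono integrable_abs_cube (integrable_expq.const_mul 1728)
        intro q; exact abs_cube_le q
    _ = 1728 * ∫ q, Real.exp (q^2/4) ∂(gaussianReal 0 1) := integral_const_mul _ _
    _ ≤ 1728 * 4 := by linarith [integral_expq_le]
    _ = 6912 := by norm_num

def F2 (t : ℝ) : ℝ × ℝ → ℝ := fun z => (max 0 (t * |z.2| - |z.1|))^2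

lemma F2_cont (t : ℝ) : Continuous (F2 t) := by unfold F2; fun_prop

lemma F2_nonneg (t : ℝ) (z : ℝ × ℝ) : 0 ≤ F2 t z := sq_nonneg _

lemma F2_le (t : ℝ) (ht : 0 ≤ t) (z : ℝ × ℝ) : F2 t z ≤ t^2 * z.2^2 := by
  unfold F2
  have h1 : max 0 (t * |z.2| - |z.1|) ≤ t * |z.2| := by
    apply max_le (by positivity)
    linarith [abs_nonneg z.1]
  calc (max 0 (t * |z.2| - |z.1|))^2 ≤ (t * |z.2|)^2 := by
        apply pow_le_pow_left₀ (le_max_left _ _) h1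
    _ = t^2 * z.2^2 := by rw [mul_pow, sq_abs]

lemma integrable_sq_snd :
    Integrable (fun z : ℝ × ℝ => z.2^2) ((gaussianReal 0 1).prod (gaussianReal 0 1)) := by
  have hmap : ((gaussianReal 0 1).prod (gaussianReal 0 1)).map Prod.snd = gaussianReal 0 1 := by
    rw [Measure.map_snd_prod]
    simp
  have := (integrable_map_measure (f := Prod.snd)
    (g := fun q : ℝ => q^2)
    (by rw [hmap]; exact (continuous_pow 2).aestronglyMeasurable)
    measurable_snd.aemeasurable).mp (by rw [hmap]; exact integrable_sq_gauss)
  exact this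

lemma F2_integrable (t : ℝ) (ht : 0 ≤ t) :
    Integrable (F2 t) ((gaussianReal 0 1).prod (gaussianReal 0 1)) := by
  apply Integrable.mono (integrable_sq_snd.const_mul (t^2))
  · exact (F2_cont t).aestronglyMeasurable
  · apply Filter.Eventually.of_forall
    intro z
    rw [norm_eq_abs, norm_eq_abs, abs_of_nonneg (F2_nonneg t z),
      abs_of_nonneg (by positivity : (0:ℝ) ≤ t^2 * z.2^2)]
    exact F2_le t ht z

lemma I_eq (t : ℝ) (ht : 0 ≤ t) :
    ∫ z, F2 t z ∂((gaussianReal 0 1).prod (gaussianReal 0 1))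
      = ∫ q, (∫ p, (max 0 (t * |q| - |p|))^2 ∂(gaussianReal 0 1)) ∂(gaussianReal 0 1) := by
  rw [integral_prod_symm _ (F2_integrable t ht)]
  rfl

lemma I_upper (t : ℝ) (ht : 0 ≤ t) :
    ∫ z, F2 t z ∂((gaussianReal 0 1).prod (gaussianReal 0 1)) ≤ 4608 * t^3 := by
  rw [I_eq t ht]
  have hint : Integrable (fun q : ℝ => ((Real.sqrt (2*Real.pi))⁻¹ * (2/3) * t^3) * |q|^3)
      (gaussianReal 0 1) := integrable_abs_cube.const_mul _
  have h1 : ∫ q, (∫ p, (max 0 (t * |q| - |p|))^2 ∂(gaussianReal 0 1)) ∂(gaussianReal 0 1)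
      ≤ ∫ q, ((Real.sqrt (2*Real.pi))⁻¹ * (2/3) * t^3) * |q|^3 ∂(gaussianReal 0 1) := by
    apply integral_mono_of_nonneg
    · apply Filter.Eventually.of_forall
      intro q
      apply integral_nonneg
      intro p; exact sq_nonneg _
    · exact hint
    · apply Filter.Eventually.of_forall
      intro q
      have := J_upper (t * |q|) (by positivity)
      calc ∫ p, (max 0 (t * |q| - |p|))^2 ∂(gaussianReal 0 1)
          ≤ (Real.sqrt (2*Real.pi))⁻¹ * (2/3 * (t*|q|)^3) := this
        _ = ((Real.sqrt (2*Real.pi))⁻¹ * (2/3) * t^3) * |q|^3 := by ring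
  have h2 : ∫ q, ((Real.sqrt (2*Real.pi))⁻¹ * (2/3) * t^3) * |q|^3 ∂(gaussianReal 0 1)
      = ((Real.sqrt (2*Real.pi))⁻¹ * (2/3) * t^3) * ∫ q, |q|^3 ∂(gaussianReal 0 1) :=
    integral_const_mul _ _
  have hsqrt : (Real.sqrt (2*Real.pi))⁻¹ ≤ 1 := by
    rw [inv_le_one_iff₀]
    right
    rw [show (1:ℝ) = Real.sqrt 1 by simp]
    apply Real.sqrt_le_sqrt
    nlinarith [Real.pi_gt_three]
  have h3 : (0:ℝ) ≤ ∫ q, |q|^3 ∂(gaussianReal 0 1) := by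
    apply integral_nonneg; intro q; positivity
  calc ∫ q, (∫ p, (max 0 (t * |q| - |p|))^2 ∂(gaussianReal 0 1)) ∂(gaussianReal 0 1)
      ≤ ((Real.sqrt (2*Real.pi))⁻¹ * (2/3) * t^3) * ∫ q, |q|^3 ∂(gaussianReal 0 1) := by
        rw [← h2]; exact h1
    _ ≤ (1 * (2/3) * t^3) * 6912 := by
        apply mul_le_mul _ integral_abs_cube_le h3 (by positivity)
        apply mul_le_mul_of_nonneg_right _ (by positivity)
        apply mul_le_mul_of_nonneg_right hsqrt (by norm_num)
    _ = 4608 * t^3 := by ring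

lemma I_lower (t : ℝ) (ht : 0 ≤ t) (ht2 : t ≤ 2) :
    Real.exp (-2) * (Real.sqrt (2*Real.pi))⁻¹ * phi 1 / 24 * t^3
      ≤ ∫ z, F2 t z ∂((gaussianReal 0 1).prod (gaussianReal 0 1)) := by
  rw [I_eq t ht]
  set K : ℝ := Real.exp (-2) * (Real.sqrt (2*Real.pi))⁻¹ with hK
  have hKpos : 0 < K := by rw [hK]; positivity
  set g : ℝ → ℝ := Set.indicator (Set.Icc (-1:ℝ) 1) (fun q => K * (2/3 * (t*|q|)^3)) with hg
  have hg_nonneg : ∀ q, 0 ≤ g q := by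
    intro q
    rw [hg]
    apply Set.indicator_nonneg
    intro q _; positivity
  have hJ_int : Integrable (fun q : ℝ => ∫ p, (max 0 (t * |q| - |p|))^2 ∂(gaussianReal 0 1))
      (gaussianReal 0 1) := by
    have := (F2_integrable t ht).integral_prod_right
    exact this
  have h1 : ∫ q, g q ∂(gaussianReal 0 1)
      ≤ ∫ q, (∫ p, (max 0 (t * |q| - |p|))^2 ∂(gaussianReal 0 1)) ∂(gaussianReal 0 1) := by
    apply integral_mono_of_nonneg
    · exact Filter.Eventually.of_forall hg_nonneg
    · exact hJ_int
    · apply Filter.Eventually.of_forall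
      intro q
      rw [hg]
      by_cases hq : q ∈ Set.Icc (-1:ℝ) 1
      · rw [Set.indicator_of_mem hq]
        have hq1 : |q| ≤ 1 := by
          rw [abs_le]; exact ⟨hq.1, hq.2⟩
        have ha2 : t * |q| ≤ 2 := by
          calc t * |q| ≤ 2 * 1 := by
                apply mul_le_mul ht2 hq1 (abs_nonneg q) (by norm_num)
            _ = 2 := by norm_num
        have := J_lower (t * |q|) (by positivity) ha2
        calc K * (2/3 * (t*|q|)^3) = K * (2/3 * (t*|q|)^3) := rfl
          _ ≤ _ := this
      · rw [Set.indicator_of_notMem hq]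
        apply integral_nonneg
        intro p; exact sq_nonneg _
  have h2 : K * phi 1 / 24 * t^3 ≤ ∫ q, g q ∂(gaussianReal 0 1) := by
    rw [integral_gauss g]
    have hrw : (fun q => phi q * g q)
        = Set.indicator (Set.Icc (-1:ℝ) 1) (fun q => phi q * (K * (2/3 * (t*|q|)^3))) := by
      funext q
      rw [hg]
      by_cases hq : q ∈ Set.Icc (-1:ℝ) 1
      · rw [Set.indicator_of_mem hq, Set.indicator_of_mem hq]
      · rw [Set.indicator_of_notMem hq, Set.indicator_of_notMem hq, mul_zero]
    rw [hrw, integral_indicator measurableSet_Icc]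
    have hcont : Continuous (fun q => phi q * (K * (2/3 * (t*|q|)^3))) := by
      apply Continuous.mul
      · unfold phi; fun_prop
      · fun_prop
    have hsub : ∫ q in Set.Icc (1/2:ℝ) 1, phi q * (K * (2/3 * (t*|q|)^3))
        ≤ ∫ q in Set.Icc (-1:ℝ) 1, phi q * (K * (2/3 * (t*|q|)^3)) := by
      apply setIntegral_mono_set
      · exact hcont.integrableOn_Icc
      · apply Filter.Eventually.of_forall
        intro q
        have : 0 ≤ phi q * (K * (2/3 * (t*|q|)^3)) := by
          apply mul_nonneg (phi_pos q).le
          positivity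
        exact this
      · apply HasSubset.Subset.eventuallyLE
        apply Set.Icc_subset_Icc <;> norm_num
    have hconst : (phi 1 * (K * (2/3 * (t*(1/2:ℝ))^3))) * ((volume (Set.Icc (1/2:ℝ) 1)).toReal)
        ≤ ∫ q in Set.Icc (1/2:ℝ) 1, phi q * (K * (2/3 * (t*|q|)^3)) := by
      apply setIntegral_ge_of_const_le_real measurableSet_Icc
        (by rw [Real.volume_Icc]; exact ENNReal.ofReal_ne_top)
      · intro q hq
        have hq1 : (1/2:ℝ) ≤ q := hq.1
        have hq2 : q ≤ 1 := hq.2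
        have habs : |q| = q := abs_of_nonneg (by linarith)
        apply mul_le_mul
        · unfold phi
          apply mul_le_mul_of_nonneg_left _ (by positivity)
          apply Real.exp_le_exp.mpr
          nlinarith
        · apply mul_le_mul_of_nonneg_left _ hKpos.le
          have : (t*(1/2:ℝ))^3 ≤ (t*|q|)^3 := by
            apply pow_le_pow_left₀ (by positivity)
            rw [habs]
            apply mul_le_mul_of_nonneg_left hq1 ht
          linarith
        · positivity
        · exact (phi_pos q).le
      · exact hcont.integrableOn_Icc
    have hvol : (volume (Set.Icc (1/2:ℝ) 1)).toReal = 1/2 := by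
      rw [Real.volume_Icc, ENNReal.toReal_ofReal (by norm_num)]
      norm_num
    rw [hvol] at hconst
    calc K * phi 1 / 24 * t^3 = (phi 1 * (K * (2/3 * (t*(1/2:ℝ))^3))) * (1/2) := by ring
      _ ≤ ∫ q in Set.Icc (1/2:ℝ) 1, phi q * (K * (2/3 * (t*|q|)^3)) := hconst
      _ ≤ _ := hsub
  calc Real.exp (-2) * (Real.sqrt (2*Real.pi))⁻¹ * phi 1 / 24 * t^3
      = K * phi 1 / 24 * t^3 := by rw [hK]
    _ ≤ ∫ q, g q ∂(gaussianReal 0 1) := h2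
    _ ≤ _ := h1

end Aux

section Main
open Real
open scoped ENNReal NNReal

/-- warm-up example with one teacher neuron and two student neurons placed
symmetrically at angle δ so that `‖w₁‖w₁ + ‖w₂‖w₂ = w*`: the loss is `Θ(δ³)`. -/
theorem warmup_loss_theta_delta_cubed :
    ∃ c₁ c₂ δ₀ : ℝ, 0 < c₁ ∧ 0 < c₂ ∧ 0 < δ₀ ∧
    ∀ (wstar u : Fin 2 → ℝ), nrm wstar = 1 → nrm u = 1 → dotp wstar u = 0 →
    ∀ δ : ℝ, 0 < δ → δ < Real.pi / 2 → δ ≤ δ₀ →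
    ∀ ρ : ℝ, ρ = (2 * Real.cos δ) ^ (-(1 : ℝ) / 2) →
    ∀ w₁ w₂ : Fin 2 → ℝ,
      w₁ = (fun k => ρ * (Real.cos δ * wstar k + Real.sin δ * u k)) →
      w₂ = (fun k => ρ * (Real.cos δ * wstar k - Real.sin δ * u k)) →
      c₁ * δ ^ 3 ≤ loss (fun _ : Fin 1 => wstar) ![w₁, w₂] ∧
      loss (fun _ : Fin 1 => wstar) ![w₁, w₂] ≤ c₂ * δ ^ 3 := by
  refine ⟨Real.exp (-2) * (Real.sqrt (2*Real.pi))⁻¹ * phi 1 / 48, 18432, 1,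
    by have := phi_pos 1; positivity, by norm_num, one_pos, ?_⟩
  intro wstar u hnw hnu hdot δ hδ0 hδπ hδ1 ρ hρ w₁ w₂ hw₁ hw₂
  set t : ℝ := Real.tan δ with htdef
  -- coordinate facts
  have hw : wstar 0 * wstar 0 + wstar 1 * wstar 1 = 1 := by
    have h1 : Real.sqrt (wstar 0 * wstar 0 + wstar 1 * wstar 1) = 1 := by
      have := hnw
      unfold nrm dotp at this
      rwa [Fin.sum_univ_two] at this
    exact Real.sqrt_eq_one.mp h1
  have hu : u 0 * u 0 + u 1 * u 1 = 1 := by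
    have h1 : Real.sqrt (u 0 * u 0 + u 1 * u 1) = 1 := by
      have := hnu
      unfold nrm dotp at this
      rwa [Fin.sum_univ_two] at this
    exact Real.sqrt_eq_one.mp h1
  have ho : wstar 0 * u 0 + wstar 1 * u 1 = 0 := by
    have := hdot
    unfold dotp at this
    rwa [Fin.sum_univ_two] at this
  have hw2 : (wstar 0)^2 + (wstar 1)^2 = 1 := by nlinarith [hw]
  have hu2 : (u 0)^2 + (u 1)^2 = 1 := by nlinarith [hu]
  -- trig facts
  have hcos : 0 < Real.cos δ := Real.cos_pos_of_mem_Ioo ⟨by linarith, hδπ⟩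
  have hsin : 0 < Real.sin δ := Real.sin_pos_of_pos_of_lt_pi hδ0
    (by nlinarith [Real.pi_gt_three])
  have hρpos : 0 < ρ := by
    rw [hρ]
    apply Real.rpow_pos_of_pos
    positivity
  have hρsq : ρ^2 = (2 * Real.cos δ)⁻¹ := by
    rw [hρ, ← Real.rpow_natCast ((2 * Real.cos δ) ^ (-(1:ℝ)/2)) 2,
      ← Real.rpow_mul (by positivity)]
    norm_num
    rw [Real.rpow_neg_one, mul_inv]
    ring
  have hcoshalf : 1/2 ≤ Real.cos δ := by
    have := Real.one_sub_sq_div_two_le_cos (x := δ)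
    nlinarith
  have htpos : 0 < t := Real.tan_pos_of_pos_of_lt_pi_div_two hδ0 hδπ
  have htge : δ ≤ t := (Real.lt_tan hδ0 hδπ).le
  have htle : t ≤ 2 * δ := by
    rw [htdef, Real.tan_eq_sin_div_cos]
    rw [div_le_iff₀ hcos]
    calc Real.sin δ ≤ δ := Real.sin_le hδ0.le
      _ = (2 * δ) * (1/2) := by ring
      _ ≤ (2 * δ) * Real.cos δ := by
          apply mul_le_mul_of_nonneg_left hcoshalf (by linarith)
  have ht2 : t ≤ 2 := by linarith
  -- pointwise identity
  have hpt : ∀ x : Fin 2 → ℝ,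
      fStu ![w₁, w₂] x - fStar (fun _ : Fin 1 => wstar) x
        = max 0 (t * |dotp u x| - |dotp wstar x|) := by
    intro x
    have hd1 : dotp w₁ x = ρ * (Real.cos δ * dotp wstar x + Real.sin δ * dotp u x) := by
      rw [hw₁]
      unfold dotp
      rw [Fin.sum_univ_two, Fin.sum_univ_two, Fin.sum_univ_two]
      ring
    have hd2 : dotp w₂ x = ρ * (Real.cos δ * dotp wstar x - Real.sin δ * dotp u x) := by
      rw [hw₂]
      unfold dotp
      rw [Fin.sum_univ_two, Fin.sum_univ_two, Fin.sum_univ_two]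
      ring
    have hsc := Real.sin_sq_add_cos_sq δ
    have hn1 : nrm w₁ = ρ := by
      unfold nrm
      have hdd : dotp w₁ w₁ = ρ^2 := by
        rw [hw₁]
        unfold dotp
        rw [Fin.sum_univ_two]
        linear_combination (ρ^2 * Real.cos δ^2) * hw + (2 * ρ^2 * Real.cos δ * Real.sin δ) * ho
          + (ρ^2 * Real.sin δ^2) * hu + ρ^2 * hsc
      rw [hdd, Real.sqrt_sq hρpos.le]
    have hn2 : nrm w₂ = ρ := by
      unfold nrm
      have hdd : dotp w₂ w₂ = ρ^2 := by
        rw [hw₂]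
        unfold dotp
        rw [Fin.sum_univ_two]
        linear_combination (ρ^2 * Real.cos δ^2) * hw - (2 * ρ^2 * Real.cos δ * Real.sin δ) * ho
          + (ρ^2 * Real.sin δ^2) * hu + ρ^2 * hsc
      rw [hdd, Real.sqrt_sq hρpos.le]
    have hfstu : fStu ![w₁, w₂] x
        = nrm w₁ * |dotp w₁ x| + nrm w₂ * |dotp w₂ x| := by
      unfold fStu
      rw [Fin.sum_univ_two]
      simp
    have hfstar : fStar (fun _ : Fin 1 => wstar) x = |dotp wstar x| := by
      unfold fStar
      rw [Fin.sum_univ_one]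
    set C : ℝ := Real.cos δ * dotp wstar x with hC
    set S : ℝ := Real.sin δ * dotp u x with hS
    have habs1 : |dotp w₁ x| = ρ * |C + S| := by
      rw [hd1, abs_mul, abs_of_pos hρpos]
    have habs2 : |dotp w₂ x| = ρ * |C - S| := by
      rw [hd2, abs_mul, abs_of_pos hρpos]
    rw [hfstu, hfstar, hn1, hn2, habs1, habs2]
    have hcollect : ρ * (ρ * |C + S|) + ρ * (ρ * |C - S|) = ρ^2 * (|C + S| + |C - S|) := by
      ring
    rw [hcollect, abs_add_abs_sub C S, hρsq]
    have hCabs : |C| = Real.cos δ * |dotp wstar x| := by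
      rw [hC, abs_mul, abs_of_pos hcos]
    have hSabs : |S| = Real.sin δ * |dotp u x| := by
      rw [hS, abs_mul, abs_of_pos hsin]
    rw [hCabs, hSabs]
    have hfold : (2 * Real.cos δ)⁻¹ * (2 * max (Real.cos δ * |dotp wstar x|) (Real.sin δ * |dotp u x|))
        = (Real.cos δ)⁻¹ * max (Real.cos δ * |dotp wstar x|) (Real.sin δ * |dotp u x|) := by
      rw [mul_inv]
      ring
    rw [hfold, mul_max_of_nonneg _ _ (by positivity : (0:ℝ) ≤ (Real.cos δ)⁻¹)]
    have e1 : (Real.cos δ)⁻¹ * (Real.cos δ * |dotp wstar x|) = |dotp wstar x| := by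
      rw [← mul_assoc, inv_mul_cancel₀ hcos.ne', one_mul]
    have e2 : (Real.cos δ)⁻¹ * (Real.sin δ * |dotp u x|) = t * |dotp u x| := by
      rw [htdef, Real.tan_eq_sin_div_cos]
      ring
    rw [e1, e2, max_sub_self]
  -- rewrite the loss
  have hloss : loss (fun _ : Fin 1 => wstar) ![w₁, w₂]
      = (1/2) * ∫ z, F2 t z ∂((gaussianReal 0 1).prod (gaussianReal 0 1)) := by
    unfold loss
    congr 1
    have hptF : (fun x : Fin 2 → ℝ => (fStu ![w₁, w₂] x - fStar (fun _ : Fin 1 => wstar) x)^2)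
        = fun x => F2 t (wstar 0 * x 0 + wstar 1 * x 1, u 0 * x 0 + u 1 * x 1) := by
      funext x
      rw [hpt x]
      unfold F2
      have hdw : dotp wstar x = wstar 0 * x 0 + wstar 1 * x 1 := by
        unfold dotp; rw [Fin.sum_univ_two]
      have hdu : dotp u x = u 0 * x 0 + u 1 * x 1 := by
        unfold dotp; rw [Fin.sum_univ_two]
      rw [hdw, hdu]
    rw [hptF]
    exact rot_integral (wstar 0) (wstar 1) (u 0) (u 1) hw2 hu2 ho (F2 t) (F2_cont t)
  constructor
  · -- lower bound
    rw [hloss]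
    have h1 := I_lower t htpos.le ht2
    have h2 : δ^3 ≤ t^3 := by
      apply pow_le_pow_left₀ hδ0.le htge
    have hKpos : 0 < Real.exp (-2) * (Real.sqrt (2*Real.pi))⁻¹ * phi 1 / 24 := by
      have := phi_pos 1
      positivity
    calc Real.exp (-2) * (Real.sqrt (2*Real.pi))⁻¹ * phi 1 / 48 * δ^3
        ≤ Real.exp (-2) * (Real.sqrt (2*Real.pi))⁻¹ * phi 1 / 48 * t^3 := by
          apply mul_le_mul_of_nonneg_left h2
          have := phi_pos 1
          positivity
      _ = (1/2) * (Real.exp (-2) * (Real.sqrt (2*Real.pi))⁻¹ * phi 1 / 24 * t^3) := by ring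
      _ ≤ (1/2) * ∫ z, F2 t z ∂((gaussianReal 0 1).prod (gaussianReal 0 1)) := by
          linarith [h1]
  · -- upper bound
    rw [hloss]
    have h1 := I_upper t htpos.le
    have h2 : t^3 ≤ (2*δ)^3 := by
      apply pow_le_pow_left₀ htpos.le htle
    calc (1/2) * ∫ z, F2 t z ∂((gaussianReal 0 1).prod (gaussianReal 0 1))
        ≤ (1/2) * (4608 * t^3) := by linarith [h1]
      _ ≤ (1/2) * (4608 * (2*δ)^3) := by nlinarith [h2]
      _ = 18432 * δ^3 := by ring
end Main
end
end

section
/- There exist absolute constants c, C > 0 such that the following holds for every d, r ≥ 1, m ≥ 1, every teacher with ‖w_i*‖ ≤ w_max for all i, and every student W: if L(W) ≤ c · r² · w_max², then Σ_{j=1}^m ‖w_j‖² ≤ C · r · w_max. -/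
open MeasureTheory ProbabilityTheory Finset
open scoped Classical

noncomputable section

/-! ### Auxiliary lemmas -/

open Real

open scoped ENNReal NNReal

section OneDim

lemma aux_pdf01 (y : ℝ) : gaussianPDFReal 0 1 y = (Real.sqrt (2 * π))⁻¹ * Real.exp (-y ^ 2 / 2) := by
  simp [gaussianPDFReal]

lemma aux_integral_g (f : ℝ → ℝ) :
    ∫ y, f y ∂(gaussianReal 0 1) = ∫ y, gaussianPDFReal 0 1 y * f y := by
  rw [gaussianReal_of_var_ne_zero 0 one_ne_zero]
  have hm : Measurable fun y => (gaussianPDFReal 0 1 y).toNNReal :=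
    (measurable_gaussianPDFReal 0 1).real_toNNReal
  have h2 : (gaussianPDF 0 1) = fun y => ((gaussianPDFReal 0 1 y).toNNReal : ℝ≥0∞) := by
    funext y; simp [gaussianPDF, ENNReal.ofReal]
  rw [h2, integral_withDensity_eq_integral_smul hm]
  congr 1; funext y
  simp [NNReal.smul_def, Real.coe_toNNReal _ (gaussianPDFReal_nonneg 0 1 y)]

lemma aux_integrable_g_iff (f : ℝ → ℝ) :
    Integrable f (gaussianReal 0 1) ↔ Integrable (fun y => gaussianPDFReal 0 1 y * f y) := by
  rw [gaussianReal_of_var_ne_zero 0 one_ne_zero]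
  have hm : Measurable fun y => (gaussianPDFReal 0 1 y).toNNReal :=
    (measurable_gaussianPDFReal 0 1).real_toNNReal
  have h2 : (gaussianPDF 0 1) = fun y => ((gaussianPDFReal 0 1 y).toNNReal : ℝ≥0∞) := by
    funext y; simp [gaussianPDF, ENNReal.ofReal]
  rw [h2, integrable_withDensity_iff_integrable_smul hm]
  constructor <;> intro h <;> refine h.congr (Filter.Eventually.of_forall fun y => ?_) <;>
    simp [NNReal.smul_def, Real.coe_toNNReal _ (gaussianPDFReal_nonneg 0 1 y)]

lemma aux_int_e : ∫ y : ℝ, Real.exp (-y ^ 2 / 2) = Real.sqrt (2 * π) := by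
  have h := integral_gaussian (1/2)
  have hfun : ∀ y : ℝ, Real.exp (-(1/2) * y ^ 2) = Real.exp (-y ^ 2 / 2) := by
    intro y; ring_nf
  rw [show (fun y : ℝ => Real.exp (-(1/2) * y^2)) = fun y : ℝ => Real.exp (-y^2/2) from
    funext hfun] at h
  rw [h]; rw [show π / (1/2) = 2 * π by ring]

lemma aux_integ_e : Integrable (fun y : ℝ => Real.exp (-y ^ 2 / 2)) := by
  have h := integrable_exp_neg_mul_sq (show (0:ℝ) < 1/2 by norm_num)
  refine h.congr (Filter.Eventually.of_forall fun y => ?_)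
  ring_nf

lemma aux_integ_mul_e : Integrable (fun y : ℝ => y * Real.exp (-y ^ 2 / 2)) := by
  have h := integrable_mul_exp_neg_mul_sq (show (0:ℝ) < 1/2 by norm_num)
  refine h.congr (Filter.Eventually.of_forall fun y => ?_)
  ring_nf

lemma aux_integ_sq_e : Integrable (fun y : ℝ => y ^ 2 * Real.exp (-y ^ 2 / 2)) := by
  have h := integrable_rpow_mul_exp_neg_mul_sq (show (0:ℝ) < 1/2 by norm_num)
    (show (-1:ℝ) < 2 by norm_num)
  refine h.congr (Filter.Eventually.of_forall fun y => ?_)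
  simp only [Real.rpow_two]
  ring_nf

lemma aux_int_mul_e : ∫ y : ℝ, y * Real.exp (-y ^ 2 / 2) = 0 := by
  have hd : ∀ y : ℝ, HasDerivAt (fun y : ℝ => -Real.exp (-y ^ 2 / 2))
      (y * Real.exp (-y^2/2)) y := by
    intro y
    have h1 : HasDerivAt (fun y : ℝ => -y ^ 2 / 2) (-y) y := by
      have := ((hasDerivAt_pow 2 y).neg).div_const 2
      simpa using this.congr_deriv (by ring)
    have := (h1.exp).neg
    exact this.congr_deriv (by ring)
  exact integral_eq_zero_of_hasDerivAt_of_integrable hd aux_integ_mul_e (aux_integ_e.neg)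

lemma aux_int_sq_e : ∫ y : ℝ, y ^ 2 * Real.exp (-y ^ 2 / 2) = Real.sqrt (2 * π) := by
  have hd : ∀ y : ℝ, HasDerivAt (fun y : ℝ => -(y * Real.exp (-y ^ 2 / 2)))
      (y ^ 2 * Real.exp (-y^2/2) - Real.exp (-y^2/2)) y := by
    intro y
    have h1 : HasDerivAt (fun y : ℝ => -y ^ 2 / 2) (-y) y := by
      have := ((hasDerivAt_pow 2 y).neg).div_const 2
      simpa using this.congr_deriv (by ring)
    have h2 := ((hasDerivAt_id y).mul h1.exp).neg
    exact h2.congr_deriv (by simp [id]; ring)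
  have hint : Integrable (fun y : ℝ => y ^ 2 * Real.exp (-y^2/2) - Real.exp (-y^2/2)) :=
    aux_integ_sq_e.sub aux_integ_e
  have h0 := integral_eq_zero_of_hasDerivAt_of_integrable hd hint (aux_integ_mul_e.neg)
  have hsub := integral_sub aux_integ_sq_e aux_integ_e
  rw [h0] at hsub
  have h2 := aux_int_e
  linarith [hsub.symm, h2]

lemma aux_sqrt2pi_pos : 0 < Real.sqrt (2 * π) := Real.sqrt_pos.2 (by positivity)

lemma aux_pdf_mul_exp (c y : ℝ) :
    gaussianPDFReal 0 1 y * Real.exp (c * y)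
      = Real.exp (c ^ 2 / 2) * ((Real.sqrt (2 * π))⁻¹ * Real.exp (-(y - c) ^ 2 / 2)) := by
  rw [aux_pdf01]
  have h : -y ^ 2 / 2 + c * y = c ^ 2 / 2 + -(y - c) ^ 2 / 2 := by ring
  rw [mul_assoc, ← Real.exp_add, h, Real.exp_add]
  ring

lemma aux_integ_exp_g (c : ℝ) : Integrable (fun y => Real.exp (c * y)) (gaussianReal 0 1) := by
  rw [aux_integrable_g_iff]
  have h : Integrable (fun y : ℝ => Real.exp (-(y - c) ^ 2 / 2)) :=
    aux_integ_e.comp_sub_right c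
  have := ((h.const_mul ((Real.sqrt (2 * π))⁻¹)).const_mul (Real.exp (c ^ 2 / 2)))
  exact this.congr (Filter.Eventually.of_forall fun y => (aux_pdf_mul_exp c y).symm)

lemma aux_int_exp_g (c : ℝ) :
    ∫ y, Real.exp (c * y) ∂(gaussianReal 0 1) = Real.exp (c ^ 2 / 2) := by
  rw [aux_integral_g]
  simp_rw [aux_pdf_mul_exp c]
  rw [integral_const_mul, integral_const_mul]
  rw [integral_sub_right_eq_self (fun y : ℝ => Real.exp (-y ^ 2 / 2)) c, aux_int_e,
    inv_mul_cancel₀ (ne_of_gt aux_sqrt2pi_pos), mul_one]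

lemma aux_int_id_g : ∫ y, y ∂(gaussianReal 0 1) = 0 := by
  rw [aux_integral_g]
  rw [show (fun y : ℝ => gaussianPDFReal 0 1 y * y)
      = fun y => (Real.sqrt (2*π))⁻¹ * (y * Real.exp (-y^2/2)) by
    funext y; simp only [aux_pdf01]; ring]
  rw [integral_const_mul, aux_int_mul_e, mul_zero]

lemma aux_integ_id_g : Integrable (fun y : ℝ => y) (gaussianReal 0 1) := by
  rw [aux_integrable_g_iff]
  refine ((aux_integ_mul_e.const_mul ((Real.sqrt (2 * π))⁻¹))).congr
    (Filter.Eventually.of_forall fun y => ?_)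
  simp only [aux_pdf01]; ring

lemma aux_int_sq_g : ∫ y, y ^ 2 ∂(gaussianReal 0 1) = 1 := by
  rw [aux_integral_g]
  rw [show (fun y : ℝ => gaussianPDFReal 0 1 y * y ^ 2)
      = fun y => (Real.sqrt (2*π))⁻¹ * (y ^ 2 * Real.exp (-y^2/2)) by
    funext y; simp only [aux_pdf01]; ring]
  rw [integral_const_mul, aux_int_sq_e, inv_mul_cancel₀ (ne_of_gt aux_sqrt2pi_pos)]

lemma aux_integ_sq_g : Integrable (fun y : ℝ => y ^ 2) (gaussianReal 0 1) := by
  rw [aux_integrable_g_iff]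
  refine ((aux_integ_sq_e.const_mul ((Real.sqrt (2 * π))⁻¹))).congr
    (Filter.Eventually.of_forall fun y => ?_)
  simp only [aux_pdf01]; ring

end OneDim

section PiProd

lemma aux_integrable_prod {n : ℕ} (μ : Measure ℝ) [IsProbabilityMeasure μ] {f : Fin n → ℝ → ℝ}
    (hf : ∀ i, Integrable (f i) μ) :
    Integrable (fun x : Fin n → ℝ => ∏ i, f i (x i)) (Measure.pi fun _ => μ) := by
  induction n with
  | zero =>
      simp only [Finset.univ_eq_empty, Finset.prod_empty]
      exact integrable_const 1
  | succ n n_ih =>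
      have hmp := ((measurePreserving_piFinSuccAbove (fun _ : Fin (n+1) => μ) 0).symm)
      rw [← hmp.integrable_comp_emb (MeasurableEquiv.measurableEmbedding _)]
      simp_rw [MeasurableEquiv.piFinSuccAbove_symm_apply, Fin.insertNthEquiv,
        Fin.prod_univ_succ, Fin.insertNth_zero]
      simp only [Fin.zero_succAbove, Function.comp_def, Fin.cons_zero, Fin.cons_succ,
        Equiv.coe_fn_mk, cast_eq]
      have h2 : Integrable (fun x : Fin n → ℝ => ∏ j, f (Fin.succ j) (x j))
          (Measure.pi fun _ => μ) :=
        n_ih (fun i => hf _)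
      exact Integrable.mul_prod (hf 0) h2

lemma aux_integral_prod {n : ℕ} (μ : Measure ℝ) [IsProbabilityMeasure μ] (f : Fin n → ℝ → ℝ) :
    ∫ x : Fin n → ℝ, ∏ i, f i (x i) ∂(Measure.pi fun _ => μ) = ∏ i, ∫ y, f i y ∂μ := by
  induction n with
  | zero =>
      simp only [Finset.univ_eq_empty, Finset.prod_empty, integral_const]
      simp
  | succ n n_ih =>
      calc
        _ = ∫ x : ℝ × (Fin n → ℝ),
            f 0 x.1 * ∏ i : Fin n, f (Fin.succ i) (x.2 i)
            ∂(μ.prod (Measure.pi fun _ => μ)) := by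
          rw [← ((measurePreserving_piFinSuccAbove
            (fun _ : Fin (n+1) => μ) 0).symm).integral_comp']
          simp only [MeasurableEquiv.piFinSuccAbove_symm_apply, Fin.insertNthEquiv,
            Fin.prod_univ_succ, Fin.insertNth_zero, Equiv.coe_fn_mk, Fin.cons_succ,
            Fin.zero_succAbove, Fin.cons_zero, cast_eq]
        _ = (∫ y, f 0 y ∂μ) * ∏ i : Fin n, ∫ y, f (Fin.succ i) y ∂μ := by
          rw [← n_ih, ← integral_prod_mul]
        _ = ∏ i, ∫ y, f i y ∂μ := by rw [Fin.prod_univ_succ]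

end PiProd

section SeriesIneq

lemma aux_nonneg_on_Ici (f f' : ℝ → ℝ) (hd : ∀ x, HasDerivAt f (f' x) x) (h0 : f 0 = 0)
    (hge : ∀ x, 0 ≤ x → 0 ≤ f' x) : ∀ u, 0 ≤ u → 0 ≤ f u := by
  intro u hu
  have hmono : MonotoneOn f (Set.Ici (0:ℝ)) := by
    apply monotoneOn_of_deriv_nonneg (convex_Ici 0)
    · exact fun x _ => (hd x).continuousAt.continuousWithinAt
    · intro x hx
      exact ((hd x).differentiableAt).differentiableWithinAt
    · intro x hx
      rw [(hd x).deriv]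
      exact hge x (le_of_lt (by simpa using hx))
  have := hmono (Set.self_mem_Ici) hu hu
  rwa [h0] at this

lemma aux_K3 : ∀ u : ℝ, 0 ≤ u → 0 ≤ Real.exp u - Real.exp (-u) - 2*u := by
  intro u hu
  have h : u ≤ Real.sinh u := Real.self_le_sinh_iff.2 hu
  rw [Real.sinh_eq] at h
  linarith

lemma aux_K2 : ∀ u : ℝ, 0 ≤ u → 0 ≤ Real.exp u + Real.exp (-u) - 2 - u^2 := by
  apply aux_nonneg_on_Ici _ (fun u => Real.exp u - Real.exp (-u) - 2*u)
  · intro x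
    have h1 : HasDerivAt (fun u : ℝ => Real.exp u) (Real.exp x) x := Real.hasDerivAt_exp x
    have h2 : HasDerivAt (fun u : ℝ => Real.exp (-u)) (-Real.exp (-x)) x := by
      have := (Real.hasDerivAt_exp (-x)).comp x ((hasDerivAt_id x).neg)
      simpa [Function.comp_def] using this
    have hh := ((h1.add h2).sub (hasDerivAt_const x (2:ℝ))).sub (hasDerivAt_pow 2 x)
    refine hh.congr_deriv ?_
    push_cast; ring
  · norm_num
  · exact aux_K3

lemma aux_K1 : ∀ u : ℝ, 0 ≤ u → 0 ≤ Real.exp u - Real.exp (-u) - 2*u - u^3/3 := by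
  apply aux_nonneg_on_Ici _ (fun u => Real.exp u + Real.exp (-u) - 2 - u^2)
  · intro x
    have h1 : HasDerivAt (fun u : ℝ => Real.exp u) (Real.exp x) x := Real.hasDerivAt_exp x
    have h2 : HasDerivAt (fun u : ℝ => Real.exp (-u)) (-Real.exp (-x)) x := by
      have := (Real.hasDerivAt_exp (-x)).comp x ((hasDerivAt_id x).neg)
      simpa [Function.comp_def] using this
    have hh := (((h1.sub h2).sub ((hasDerivAt_id x).const_mul 2)).sub
      ((hasDerivAt_pow 3 x).div_const 3))
    refine hh.congr_deriv ?_
    push_cast; ring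
  · norm_num
  · exact aux_K2

lemma aux_K0 : ∀ u : ℝ, 0 ≤ u → 0 ≤ Real.exp u + Real.exp (-u) - 2 - u^2 - u^4/12 := by
  apply aux_nonneg_on_Ici _ (fun u => Real.exp u - Real.exp (-u) - 2*u - u^3/3)
  · intro x
    have h1 : HasDerivAt (fun u : ℝ => Real.exp u) (Real.exp x) x := Real.hasDerivAt_exp x
    have h2 : HasDerivAt (fun u : ℝ => Real.exp (-u)) (-Real.exp (-x)) x := by
      have := (Real.hasDerivAt_exp (-x)).comp x ((hasDerivAt_id x).neg)
      simpa [Function.comp_def] using this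
    have hh := ((((h1.add h2).sub (hasDerivAt_const x (2:ℝ))).sub (hasDerivAt_pow 2 x)).sub
      ((hasDerivAt_pow 4 x).div_const 12))
    refine hh.congr_deriv ?_
    push_cast; ring
  · norm_num
  · exact aux_K1

lemma aux_coshK : ∀ u : ℝ, 2 + u^2 + u^4/12 ≤ Real.exp u + Real.exp (-u) := by
  intro u
  rcases le_total 0 u with h | h
  · have := aux_K0 u h; linarith
  · have := aux_K0 (-u) (by linarith)
    rw [neg_neg] at this
    have h2 : (-u)^2 = u^2 := by ring
    have h4 : (-u)^4 = u^4 := by ring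
    rw [h2, h4] at this
    linarith

lemma aux_abs_lb : ∀ z : ℝ, z^2 - z^4/4 ≤ |z| := by
  intro z
  have h1 : z^2 = |z|^2 := (sq_abs z).symm
  have h2 : z^4 = |z|^4 := by rw [show (4:ℕ) = 2*2 from rfl, pow_mul, pow_mul, sq_abs]
  rw [h1, h2]
  have ht : 0 ≤ |z| := abs_nonneg z
  nlinarith [mul_nonneg ht (sq_nonneg (|z| - 3/2)), sq_nonneg (|z| - 25/24)]

lemma aux_exp_quarter_le : Real.exp (1/4 : ℝ) ≤ 185/144 := by
  have h := Real.exp_bound' (by norm_num : (0:ℝ) ≤ 1/4) (by norm_num : (1/4:ℝ) ≤ 1)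
    (by norm_num : 0 < 4)
  calc Real.exp (1/4:ℝ) ≤ _ := h
    _ ≤ 185/144 := by
      norm_num [Finset.sum_range_succ, Nat.factorial]

end SeriesIneq

section DotpMoments

variable {d : ℕ}

lemma aux_stdG_eq (d : ℕ) : stdG d = Measure.pi fun _ : Fin d => gaussianReal 0 1 := rfl

lemma aux_dotp_meas (w : Fin d → ℝ) : Measurable fun x : Fin d → ℝ => dotp w x := by
  unfold dotp
  exact Finset.measurable_sum Finset.univ fun i _ => (measurable_const.mul (measurable_pi_apply i))

lemma aux_dotp_self_nonneg (w : Fin d → ℝ) : 0 ≤ dotp w w :=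
  Finset.sum_nonneg fun i _ => mul_self_nonneg _

lemma aux_nrm_nonneg (w : Fin d → ℝ) : 0 ≤ nrm w := Real.sqrt_nonneg _

lemma aux_nrm_sq (w : Fin d → ℝ) : nrm w ^ 2 = dotp w w :=
  Real.sq_sqrt (aux_dotp_self_nonneg w)

lemma aux_exp_dotp_eq (c : ℝ) (w : Fin d → ℝ) (x : Fin d → ℝ) :
    ∏ i, (fun (i : Fin d) (y : ℝ) => Real.exp (c * w i * y)) i (x i)
      = Real.exp (c * dotp w x) := by
  simp only []
  rw [← Real.exp_sum]
  congr 1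
  unfold dotp
  rw [Finset.mul_sum]
  exact (Finset.sum_congr rfl fun i _ => by ring).symm

lemma aux_integ_exp_dotp (c : ℝ) (w : Fin d → ℝ) :
    Integrable (fun x => Real.exp (c * dotp w x)) (stdG d) := by
  have h := aux_integrable_prod (n := d) (gaussianReal 0 1)
    (f := fun i (y : ℝ) => Real.exp (c * w i * y)) (fun i => aux_integ_exp_g (c * w i))
  exact h.congr (Filter.Eventually.of_forall fun x => aux_exp_dotp_eq c w x)

lemma aux_int_exp_dotp (c : ℝ) (w : Fin d → ℝ) :
    ∫ x, Real.exp (c * dotp w x) ∂(stdG d) = Real.exp (c^2 * dotp w w / 2) := by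
  have he : ∫ x, Real.exp (c * dotp w x) ∂(stdG d)
      = ∫ x : Fin d → ℝ, ∏ i, (fun (i : Fin d) (y : ℝ) => Real.exp (c * w i * y)) i (x i)
        ∂(Measure.pi fun _ => gaussianReal 0 1) := by
    rw [← aux_stdG_eq]
    exact integral_congr_ae (Filter.Eventually.of_forall fun x => (aux_exp_dotp_eq c w x).symm)
  rw [he, aux_integral_prod (gaussianReal 0 1) (fun (i : Fin d) (y : ℝ) => Real.exp (c * w i * y))]
  rw [Finset.prod_congr rfl (fun (i : Fin d) _ => aux_int_exp_g (c * w i))]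
  rw [← Real.exp_sum]
  congr 1
  unfold dotp
  rw [Finset.mul_sum, Finset.sum_div]
  exact Finset.sum_congr rfl fun i _ => by ring

lemma aux_prod_sq (i : Fin d) (x : Fin d → ℝ) :
    ∏ t, (fun (t : Fin d) (y : ℝ) => if t = i then y ^ 2 else 1) t (x t) = x i * x i := by
  rw [Finset.prod_eq_single i (fun b _ hb => if_neg hb) (fun h => absurd (Finset.mem_univ i) h)]
  simp [sq]

lemma aux_prod_pair {i j : Fin d} (hne : i ≠ j) (x : Fin d → ℝ) :
    ∏ t, (fun (t : Fin d) (y : ℝ) => if t = i then y else if t = j then y else 1) t (x t)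
      = x i * x j := by
  rw [← Finset.mul_prod_erase Finset.univ _ (Finset.mem_univ i),
    ← Finset.mul_prod_erase _ _ (Finset.mem_erase.2 ⟨hne.symm, Finset.mem_univ j⟩),
    Finset.prod_eq_one (fun t ht => ?_)]
  · simp [hne.symm]
  · have h1 : t ≠ j := (Finset.mem_erase.1 ht).1
    have h2 : t ≠ i := (Finset.mem_erase.1 (Finset.mem_erase.1 ht).2).1
    simp [h1, h2]

lemma aux_integ_pair (i j : Fin d) :
    Integrable (fun x : Fin d → ℝ => x i * x j) (stdG d) := by
  rcases eq_or_ne i j with rfl | hne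
  · have h := aux_integrable_prod (n := d) (gaussianReal 0 1)
      (f := fun t y => if t = i then y ^ 2 else 1) (fun t => ?_)
    · exact h.congr (Filter.Eventually.of_forall fun x => aux_prod_sq i x)
    · show Integrable (fun y : ℝ => if t = i then y ^ 2 else 1) (gaussianReal 0 1)
      by_cases h : t = i
      · have : (fun y : ℝ => if t = i then y ^ 2 else 1) = fun y : ℝ => y ^ 2 := by
          funext y; rw [if_pos h]
        rw [this]; exact aux_integ_sq_g
      · have : (fun y : ℝ => if t = i then y ^ 2 else 1) = fun _ => 1 := by
          funext y; rw [if_neg h]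
        rw [this]; exact integrable_const 1
  · have h := aux_integrable_prod (n := d) (gaussianReal 0 1)
      (f := fun t y => if t = i then y else if t = j then y else 1) (fun t => ?_)
    · exact h.congr (Filter.Eventually.of_forall fun x => aux_prod_pair hne x)
    · show Integrable (fun y : ℝ => if t = i then y else if t = j then y else 1) (gaussianReal 0 1)
      by_cases h : t = i
      · have : (fun y : ℝ => if t = i then y else if t = j then y else 1) = fun y => y := by
          funext y; rw [if_pos h]
        rw [this]; exact aux_integ_id_g
      · by_cases h' : t = j
        · have : (fun y : ℝ => if t = i then y else if t = j then y else 1) = fun y => y := by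
            funext y; rw [if_neg h, if_pos h']
          rw [this]; exact aux_integ_id_g
        · have : (fun y : ℝ => if t = i then y else if t = j then y else 1) = fun _ => 1 := by
            funext y; rw [if_neg h, if_neg h']
          rw [this]; exact integrable_const 1

lemma aux_int_pair (i j : Fin d) :
    ∫ x, x i * x j ∂(stdG d) = if i = j then 1 else 0 := by
  rcases eq_or_ne i j with rfl | hne
  · rw [if_pos rfl]
    have he : ∫ x, x i * x i ∂(stdG d)
        = ∫ x : Fin d → ℝ, ∏ t, (fun (t : Fin d) (y : ℝ) => if t = i then y ^ 2 else 1) t (x t)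
          ∂(Measure.pi fun _ => gaussianReal 0 1) := by
      rw [← aux_stdG_eq]
      exact integral_congr_ae (Filter.Eventually.of_forall fun x => (aux_prod_sq i x).symm)
    rw [he, aux_integral_prod (gaussianReal 0 1)
      (fun (t : Fin d) (y : ℝ) => if t = i then y ^ 2 else 1)]
    refine Finset.prod_eq_one fun t _ => ?_
    show (∫ y, (if t = i then y ^ 2 else 1) ∂(gaussianReal 0 1)) = 1
    by_cases h : t = i
    · have : (fun y : ℝ => if t = i then y ^ 2 else 1) = fun y : ℝ => y ^ 2 := by
        funext y; rw [if_pos h]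
      rw [this]; exact aux_int_sq_g
    · have : (fun y : ℝ => if t = i then y ^ 2 else 1) = fun _ => 1 := by
        funext y; rw [if_neg h]
      rw [this]; simp
  · rw [if_neg hne]
    have he : ∫ x, x i * x j ∂(stdG d)
        = ∫ x : Fin d → ℝ, ∏ t, (fun (t : Fin d) (y : ℝ) =>
            if t = i then y else if t = j then y else 1) t (x t)
          ∂(Measure.pi fun _ => gaussianReal 0 1) := by
      rw [← aux_stdG_eq]
      exact integral_congr_ae (Filter.Eventually.of_forall fun x => (aux_prod_pair hne x).symm)
    rw [he, aux_integral_prod (gaussianReal 0 1)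
      (fun (t : Fin d) (y : ℝ) => if t = i then y else if t = j then y else 1)]
    refine Finset.prod_eq_zero (Finset.mem_univ i) ?_
    show (∫ y, (if i = i then y else if i = j then y else 1) ∂(gaussianReal 0 1)) = 0
    have : (fun y : ℝ => if i = i then y else if i = j then y else 1) = fun y => y := by
      funext y; rw [if_pos rfl]
    rw [this]; exact aux_int_id_g

lemma aux_dotp_sq_expand (w : Fin d → ℝ) :
    (fun x : Fin d → ℝ => (dotp w x)^2)
      = fun x => ∑ i, ∑ j, (w i * w j) * (x i * x j) := by
  funext x
  unfold dotp
  rw [sq, Finset.sum_mul_sum]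
  exact Finset.sum_congr rfl fun i _ => Finset.sum_congr rfl fun j _ => by ring

lemma aux_integ_dotp_sq (w : Fin d → ℝ) :
    Integrable (fun x => (dotp w x)^2) (stdG d) := by
  rw [aux_dotp_sq_expand]
  exact integrable_finset_sum _ fun i _ =>
    integrable_finset_sum _ fun j _ => (aux_integ_pair i j).const_mul _

lemma aux_int_dotp_sq (w : Fin d → ℝ) :
    ∫ x, (dotp w x)^2 ∂(stdG d) = dotp w w := by
  rw [aux_dotp_sq_expand,
    integral_finset_sum _ (fun i _ =>
      integrable_finset_sum _ fun j _ => (aux_integ_pair i j).const_mul _)]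
  have hin : ∀ i : Fin d, ∫ x, ∑ j, (w i * w j) * (x i * x j) ∂(stdG d) = w i * w i := by
    intro i
    rw [integral_finset_sum _ (fun j _ => (aux_integ_pair i j).const_mul _)]
    have hterm : ∀ j : Fin d,
        ∫ x, (w i * w j) * (x i * x j) ∂(stdG d) = if i = j then w i * w j else 0 := by
      intro j
      rw [integral_const_mul, aux_int_pair]
      by_cases h : i = j <;> simp [h]
    rw [Finset.sum_congr rfl fun j _ => hterm j]
    simp
  rw [Finset.sum_congr rfl fun i _ => hin i]
  unfold dotp
  rfl

lemma aux_z4_bound (w : Fin d → ℝ) (x : Fin d → ℝ) :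
    (dotp w x)^4 ≤ 48 * (Real.exp (Real.sqrt (1/2) * dotp w x)
      + Real.exp ((-Real.sqrt (1/2)) * dotp w x) - 2 - (dotp w x)^2/2) := by
  set z := dotp w x
  set c := Real.sqrt (1/2 : ℝ) with hcdef
  have hc : c^2 = 1/2 := Real.sq_sqrt (by norm_num)
  have h := aux_coshK (c * z)
  have e2 : (c*z)^2 = z^2/2 := by rw [mul_pow, hc]; ring
  have e4 : (c*z)^4 = z^4/4 := by
    rw [mul_pow, show c^4 = (c^2)^2 by ring, hc]; ring
  rw [e2, e4] at h
  have hne : Real.exp (-(c * z)) = Real.exp ((-c) * z) := by rw [neg_mul]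
  rw [hne] at h
  linarith

lemma aux_integ_dotp_four (w : Fin d → ℝ) :
    Integrable (fun x => (dotp w x)^4) (stdG d) := by
  have hg : Integrable (fun x => 48 * (Real.exp (Real.sqrt (1/2) * dotp w x)
      + Real.exp ((-Real.sqrt (1/2)) * dotp w x))) (stdG d) :=
    ((aux_integ_exp_dotp (Real.sqrt (1/2)) w).add
      (aux_integ_exp_dotp (-Real.sqrt (1/2)) w)).const_mul 48
  refine Integrable.mono' hg
    (((aux_dotp_meas w).pow_const 4).aestronglyMeasurable)
    (Filter.Eventually.of_forall fun x => ?_)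
  have h1 := aux_z4_bound w x
  have h2 : (0:ℝ) ≤ (dotp w x)^2/2 := by positivity
  have h3 : (0:ℝ) ≤ (dotp w x)^4 := by positivity
  rw [Real.norm_eq_abs, abs_of_nonneg h3]
  linarith

lemma aux_integ_dotp_abs (w : Fin d → ℝ) :
    Integrable (fun x => |dotp w x|) (stdG d) := by
  have hg : Integrable (fun x => 1 + (dotp w x)^2) (stdG d) :=
    (integrable_const 1).add (aux_integ_dotp_sq w)
  refine Integrable.mono' hg ((aux_dotp_meas w).abs.aestronglyMeasurable)
    (Filter.Eventually.of_forall fun x => ?_)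
  rw [Real.norm_eq_abs, abs_abs]
  nlinarith [sq_nonneg (|dotp w x| - 1), sq_abs (dotp w x)]

lemma aux_memℒp2_dotp_abs (w : Fin d → ℝ) :
    MemLp (fun x => |dotp w x|) 2 (stdG d) := by
  refine (memLp_two_iff_integrable_sq
    ((aux_dotp_meas w).abs.aestronglyMeasurable)).2 ?_
  have := aux_integ_dotp_sq w
  refine this.congr (Filter.Eventually.of_forall fun x => ?_)
  simp [sq_abs]

lemma aux_int_abs_le (w : Fin d → ℝ) :
    ∫ x, |dotp w x| ∂(stdG d) ≤ nrm w := by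
  have hvar := variance_nonneg (fun x => |dotp w x|) (stdG d)
  rw [variance_eq_sub (aux_memℒp2_dotp_abs w)] at hvar
  have h2 : (stdG d)[(fun x => |dotp w x|) ^ 2] = dotp w w := by
    have : ((fun x => |dotp w x|) ^ 2) = fun x => (dotp w x)^2 := by
      funext x; simp [sq_abs]
    rw [this, aux_int_dotp_sq]
  rw [h2] at hvar
  have hnn : 0 ≤ ∫ x, |dotp w x| ∂(stdG d) :=
    integral_nonneg fun x => abs_nonneg _
  have hsq : (∫ x, |dotp w x| ∂(stdG d))^2 ≤ dotp w w := by linarith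
  calc ∫ x, |dotp w x| ∂(stdG d)
      = Real.sqrt ((∫ x, |dotp w x| ∂(stdG d))^2) := (Real.sqrt_sq hnn).symm
    _ ≤ Real.sqrt (dotp w w) := Real.sqrt_le_sqrt hsq
    _ = nrm w := rfl

lemma aux_int_abs_ge_unit (w : Fin d → ℝ) (hw : dotp w w = 1) :
    1/6 ≤ ∫ x, |dotp w x| ∂(stdG d) := by
  have hE1 : Integrable (fun x => Real.exp (Real.sqrt (1/2) * dotp w x)
      + Real.exp ((-Real.sqrt (1/2)) * dotp w x)) (stdG d) :=
    (aux_integ_exp_dotp (Real.sqrt (1/2)) w).add (aux_integ_exp_dotp (-Real.sqrt (1/2)) w)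
  have hE2 : Integrable (fun x => Real.exp (Real.sqrt (1/2) * dotp w x)
      + Real.exp ((-Real.sqrt (1/2)) * dotp w x) - 2) (stdG d) := hE1.sub (integrable_const 2)
  have hE3 : Integrable (fun x => (dotp w x)^2/2) (stdG d) :=
    (aux_integ_dotp_sq w).div_const 2
  have hint4 : ∫ x, (dotp w x)^4 ∂(stdG d) ≤ 96 * Real.exp (1/4) - 120 := by
    have hgint : Integrable (fun x => 48 * (Real.exp (Real.sqrt (1/2) * dotp w x)
        + Real.exp ((-Real.sqrt (1/2)) * dotp w x) - 2 - (dotp w x)^2/2)) (stdG d) :=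
      (hE2.sub hE3).const_mul 48
    have hmono := integral_mono (aux_integ_dotp_four w) hgint (fun x => aux_z4_bound w x)
    have hval : ∫ x, 48 * (Real.exp (Real.sqrt (1/2) * dotp w x)
        + Real.exp ((-Real.sqrt (1/2)) * dotp w x) - 2 - (dotp w x)^2/2) ∂(stdG d)
        = 96 * Real.exp (1/4) - 120 := by
      rw [integral_const_mul, integral_sub hE2 hE3, integral_sub hE1 (integrable_const 2),
        integral_add (aux_integ_exp_dotp (Real.sqrt (1/2)) w)
          (aux_integ_exp_dotp (-Real.sqrt (1/2)) w),
        aux_int_exp_dotp, aux_int_exp_dotp, hw, integral_div, aux_int_dotp_sq, hw]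
      have hc : (Real.sqrt (1/2 : ℝ))^2 = 1/2 := Real.sq_sqrt (by norm_num)
      have hc' : ((-Real.sqrt (1/2 : ℝ)))^2 = 1/2 := by rw [neg_pow]; simp [hc]
      rw [hc, hc']
      simp only [integral_const, measure_univ, ENNReal.toReal_one, smul_eq_mul, one_mul]
      norm_num
      ring
    linarith
  have hlow : ∫ x, ((dotp w x)^2 - (dotp w x)^4/4) ∂(stdG d)
      ≤ ∫ x, |dotp w x| ∂(stdG d) := by
    refine integral_mono ((aux_integ_dotp_sq w).sub ((aux_integ_dotp_four w).div_const 4))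
      (aux_integ_dotp_abs w) (fun x => aux_abs_lb (dotp w x))
  rw [integral_sub (aux_integ_dotp_sq w) ((aux_integ_dotp_four w).div_const 4),
    integral_div, aux_int_dotp_sq, hw] at hlow
  have hexp := aux_exp_quarter_le
  linarith

lemma aux_int_abs_ge (w : Fin d → ℝ) :
    nrm w / 6 ≤ ∫ x, |dotp w x| ∂(stdG d) := by
  rcases eq_or_ne (dotp w w) 0 with h0 | h0
  · have hz : nrm w = 0 := by rw [nrm, h0, Real.sqrt_zero]
    rw [hz]
    simpa using integral_nonneg fun x => abs_nonneg (dotp w x)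
  · have hpos : 0 < dotp w w := lt_of_le_of_ne (aux_dotp_self_nonneg w) (Ne.symm h0)
    have hs : 0 < nrm w := Real.sqrt_pos.2 hpos
    set s := nrm w with hsdef
    set u : Fin d → ℝ := fun k => w k / s with hu
    have hsq : s^2 = dotp w w := aux_nrm_sq w
    have huu : dotp u u = 1 := by
      unfold dotp
      have hterm : ∀ k : Fin d, u k * u k = (w k * w k) / s^2 := by
        intro k
        show w k / s * (w k / s) = w k * w k / s ^ 2
        rw [div_mul_div_comm]; ring
      rw [Finset.sum_congr rfl fun k _ => hterm k, ← Finset.sum_div]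
      have : (∑ k, w k * w k) = dotp w w := rfl
      rw [this, ← hsq]
      exact div_self (by positivity)
    have hlin : ∀ x, |dotp w x| = s * |dotp u x| := by
      intro x
      have : dotp w x = s * dotp u x := by
        unfold dotp
        rw [Finset.mul_sum]
        refine Finset.sum_congr rfl fun k _ => ?_
        show w k * x k = s * (w k / s * x k)
        rw [show s * (w k / s * x k) = (w k / s * s) * x k from by ring,
          div_mul_cancel₀ _ hs.ne']
      rw [this, abs_mul, abs_of_pos hs]
    have h1 : s * (1/6) ≤ s * ∫ x, |dotp u x| ∂(stdG d) :=
      mul_le_mul_of_nonneg_left (aux_int_abs_ge_unit u huu) hs.le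
    have h2 : s * ∫ x, |dotp u x| ∂(stdG d) = ∫ x, |dotp w x| ∂(stdG d) := by
      rw [← integral_const_mul]
      exact integral_congr_ae (Filter.Eventually.of_forall fun x => (hlin x).symm)
    calc nrm w / 6 = s * (1/6) := by rw [← hsdef]; ring
      _ ≤ s * ∫ x, |dotp u x| ∂(stdG d) := h1
      _ = ∫ x, |dotp w x| ∂(stdG d) := h2

end DotpMoments

section Networks

variable {d r m : ℕ}

lemma aux_memℒp2_fStar (ws : Fin r → Fin d → ℝ) : MemLp (fStar ws) 2 (stdG d) := by
  have : fStar ws = fun x => ∑ i, |dotp (ws i) x| := rfl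
  rw [this]
  exact memLp_finset_sum _ fun i _ => aux_memℒp2_dotp_abs (ws i)

lemma aux_memℒp2_fStu (W : Fin m → Fin d → ℝ) : MemLp (fStu W) 2 (stdG d) := by
  have : fStu W = fun x => ∑ j, nrm (W j) * |dotp (W j) x| := rfl
  rw [this]
  exact memLp_finset_sum _ fun j _ => (aux_memℒp2_dotp_abs (W j)).const_mul _

lemma aux_int_fStar_le (ws : Fin r → Fin d → ℝ) :
    ∫ x, fStar ws x ∂(stdG d) ≤ ∑ i, nrm (ws i) := by
  have : (fun x => fStar ws x) = fun x => ∑ i, |dotp (ws i) x| := rfl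
  rw [this, integral_finset_sum _ fun i _ => aux_integ_dotp_abs (ws i)]
  exact Finset.sum_le_sum fun i _ => aux_int_abs_le (ws i)

lemma aux_int_fStu_ge (W : Fin m → Fin d → ℝ) :
    (∑ j, nrm (W j) ^ 2) / 6 ≤ ∫ x, fStu W x ∂(stdG d) := by
  have hfe : (fun x => fStu W x) = fun x => ∑ j, nrm (W j) * |dotp (W j) x| := rfl
  rw [hfe, integral_finset_sum _ fun j _ => (aux_integ_dotp_abs (W j)).const_mul _]
  rw [Finset.sum_div]
  refine Finset.sum_le_sum fun j _ => ?_
  rw [integral_const_mul]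
  calc nrm (W j) ^ 2 / 6 = nrm (W j) * (nrm (W j) / 6) := by ring
    _ ≤ nrm (W j) * ∫ x, |dotp (W j) x| ∂(stdG d) :=
        mul_le_mul_of_nonneg_left (aux_int_abs_ge (W j)) (aux_nrm_nonneg (W j))

end Networks

/-- Lemma B.4: if `L(W) ≤ c r² w_max²` then `∑ⱼ ‖wⱼ‖² ≤ C r w_max`. -/
theorem sum_norm_bound :
    ∃ c C : ℝ, 0 < c ∧ 0 < C ∧
    ∀ (d r m : ℕ), 1 ≤ r → 1 ≤ m →
    ∀ (ws : Fin r → Fin d → ℝ) (wmax : ℝ), (∀ i, nrm (ws i) ≤ wmax) →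
    ∀ W : Fin m → Fin d → ℝ, loss ws W ≤ c * r ^ 2 * wmax ^ 2 →
      ∑ j, nrm (W j) ^ 2 ≤ C * r * wmax := by
  refine ⟨1/2, 12, by norm_num, by norm_num, ?_⟩
  intro d r m hr _hm ws wmax hws W hloss
  have hwmax : 0 ≤ wmax := le_trans (aux_nrm_nonneg (ws ⟨0, hr⟩)) (hws ⟨0, hr⟩)
  have hrw : (0:ℝ) ≤ (r:ℝ) * wmax := by positivity
  set D : (Fin d → ℝ) → ℝ := fStu W - fStar ws with hD
  have hD2 : MemLp D 2 (stdG d) := (aux_memℒp2_fStu W).sub (aux_memℒp2_fStar ws)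
  have hDapp : ∀ x, D x = fStu W x - fStar ws x := fun x => rfl
  have hDint : Integrable D (stdG d) := hD2.integrable one_le_two
  -- loss bound gives ∫ D^2 ≤ (r wmax)^2
  have hL : ∫ x, (D x)^2 ∂(stdG d) ≤ ((r:ℝ) * wmax)^2 := by
    have : loss ws W = (1/2) * ∫ x, (D x)^2 ∂(stdG d) := rfl
    rw [this] at hloss
    nlinarith [hloss]
  -- (∫ D)^2 ≤ ∫ D^2
  have hvar := variance_nonneg D (stdG d)
  rw [variance_eq_sub hD2] at hvar
  have hDsq : (stdG d)[D ^ 2] = ∫ x, (D x)^2 ∂(stdG d) := rfl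
  rw [hDsq] at hvar
  have hED : ∫ x, D x ∂(stdG d) ≤ (r:ℝ) * wmax := by
    have h1 : (∫ x, D x ∂(stdG d))^2 ≤ ((r:ℝ) * wmax)^2 := by linarith
    nlinarith [h1, hrw]
  -- ∫ fStu = ∫ D + ∫ fStar
  have hfStarInt : Integrable (fStar ws) (stdG d) :=
    (aux_memℒp2_fStar ws).integrable one_le_two
  have hfStuInt : Integrable (fStu W) (stdG d) :=
    (aux_memℒp2_fStu W).integrable one_le_two
  have hsplit : ∫ x, fStu W x ∂(stdG d)
      = (∫ x, D x ∂(stdG d)) + ∫ x, fStar ws x ∂(stdG d) := by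
    have : ∫ x, D x ∂(stdG d)
        = (∫ x, fStu W x ∂(stdG d)) - ∫ x, fStar ws x ∂(stdG d) := by
      simp_rw [hDapp]
      exact integral_sub hfStuInt hfStarInt
    linarith
  have hstar : ∫ x, fStar ws x ∂(stdG d) ≤ (r:ℝ) * wmax := by
    refine le_trans (aux_int_fStar_le ws) ?_
    calc ∑ i, nrm (ws i) ≤ ∑ _i : Fin r, wmax := Finset.sum_le_sum fun i _ => hws i
      _ = (r:ℝ) * wmax := by rw [Finset.sum_const, Finset.card_univ, Fintype.card_fin,
            nsmul_eq_mul]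
  have hstu := aux_int_fStu_ge W
  have : (∑ j, nrm (W j) ^ 2) / 6 ≤ 2 * ((r:ℝ) * wmax) := by
    calc (∑ j, nrm (W j) ^ 2) / 6 ≤ ∫ x, fStu W x ∂(stdG d) := hstu
      _ = (∫ x, D x ∂(stdG d)) + ∫ x, fStar ws x ∂(stdG d) := hsplit
      _ ≤ (r:ℝ) * wmax + (r:ℝ) * wmax := add_le_add hED hstar
      _ = 2 * ((r:ℝ) * wmax) := by ring
  linarith
end
end

section
/- For every d, r ≥ 1, m ≥ 1, every teacher neurons w_1*, …, w_r* ∈ ℝ^d, every α ≥ 0, and every student W satisfying the sign convention ⟨w_j, w_i*⟩ ≥ 0 for all i ∈ [r], j ∈ T_i: if ‖v_i‖ ≤ α for all i ∈ [r], where v_i = Σ_{j ∈ T_i} ‖w_j‖ w_j − w_i*, then for every x ∈ ℝ^d one has |R_1(x)| ≤ r · α · ‖x‖ and R_2(x) ≥ 0, where R_1(x) = Σ_{i=1}^r ⟨v_i, x⟩ sgn(⟨w_i*, x⟩) and R_2(x) = Σ_{i=1}^r Σ_{j ∈ T_i} ‖w_j‖ ⟨w_j, x⟩ (sgn(⟨w_j,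 x⟩) − sgn(⟨w_i*, x⟩)). Moreover R_1(x) + R_2(x) = f_W(x) − f*(x) for all x. -/
open MeasureTheory ProbabilityTheory Finset
open scoped Classical

noncomputable section

lemma mul_sign_self (t : ℝ) : t * Real.sign t = |t| := by
  rcases lt_trichotomy t 0 with h|h|h
  · rw [Real.sign_of_neg h, abs_of_neg h]; ring
  · simp [h]
  · rw [Real.sign_of_pos h, abs_of_pos h]; ring

lemma sign_abs_le (t : ℝ) : |Real.sign t| ≤ 1 := by
  rcases lt_trichotomy t 0 with h|h|h <;>
    simp [Real.sign_of_neg, Real.sign_of_pos, *]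

lemma dotp_cs {d : ℕ} (v x : Fin d → ℝ) : |dotp v x| ≤ nrm v * nrm x := by
  have h := abs_real_inner_le_norm (F := EuclideanSpace ℝ (Fin d)) (WithLp.toLp 2 v) (WithLp.toLp 2 x)
  simp only [PiLp.inner_apply, RCLike.inner_apply, starRingEnd_apply, star_trivial,
    EuclideanSpace.norm_eq] at h
  simpa [dotp, nrm, sq, PiLp.toLp_apply, mul_comm] using h

/-- Property of the residual, Lemma B.2: under the sign convention, if
each average-neuron error `v_i = ∑_{j ∈ T_i} ‖w_j‖ w_j - w_i*` has `‖v_i‖ ≤ α`, then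
pointwise `|R₁(x)| ≤ r α ‖x‖`, `R₂(x) ≥ 0`, and `R₁ + R₂` equals the residual. -/
theorem residual_decomposition {d r m : ℕ} (hr : 1 ≤ r) (hm : 1 ≤ m)
    (ws : Fin r → Fin d → ℝ) (W : Fin m → Fin d → ℝ) (P : Fin m → Fin r)
    (hP : ∀ (j : Fin m) (k : Fin r), ang (W j) (ws (P j)) ≤ ang (W j) (ws k))
    (hsign : ∀ j : Fin m, 0 ≤ dotp (W j) (ws (P j)))
    (α : ℝ) (hα : 0 ≤ α)
    (v : Fin r → Fin d → ℝ)
    (hvdef : ∀ (i : Fin r) (k : Fin d),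
      v i k = (∑ j ∈ Finset.univ.filter (fun j => P j = i), nrm (W j) * W j k) - ws i k)
    (hv : ∀ i : Fin r, nrm (v i) ≤ α) :
    ∀ x : Fin d → ℝ,
      |∑ i, dotp (v i) x * Real.sign (dotp (ws i) x)| ≤ r * α * nrm x ∧
      0 ≤ ∑ j, nrm (W j) * dotp (W j) x *
            (Real.sign (dotp (W j) x) - Real.sign (dotp (ws (P j)) x)) ∧
      (∑ i, dotp (v i) x * Real.sign (dotp (ws i) x)) +
        (∑ j, nrm (W j) * dotp (W j) x *
          (Real.sign (dotp (W j) x) - Real.sign (dotp (ws (P j)) x))) =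
        fStu W x - fStar ws x := by
  intro x
  set s : Fin r → ℝ := fun i => Real.sign (dotp (ws i) x) with hs
  have hdv : ∀ i : Fin r, dotp (v i) x =
      (∑ j ∈ Finset.univ.filter (fun j => P j = i), nrm (W j) * dotp (W j) x)
        - dotp (ws i) x := by
    intro i
    simp only [dotp, hvdef, sub_mul, Finset.sum_sub_distrib, Finset.sum_mul]
    rw [Finset.sum_comm]
    congr 1
    refine Finset.sum_congr rfl fun j _ => ?_
    rw [Finset.mul_sum]
    exact Finset.sum_congr rfl fun k _ => by ring
  refine ⟨?_, ?_, ?_⟩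
  · calc |∑ i, dotp (v i) x * Real.sign (dotp (ws i) x)|
        ≤ ∑ i, |dotp (v i) x * Real.sign (dotp (ws i) x)| := Finset.abs_sum_le_sum_abs _ _
      _ ≤ ∑ _i : Fin r, α * nrm x := by
          refine Finset.sum_le_sum fun i _ => ?_
          rw [abs_mul]
          calc |dotp (v i) x| * |Real.sign (dotp (ws i) x)|
              ≤ (nrm (v i) * nrm x) * 1 :=
                mul_le_mul (dotp_cs _ _) (sign_abs_le _) (abs_nonneg _)
                  (mul_nonneg (nrm_nonneg _) (nrm_nonneg _))
            _ ≤ α * nrm x := by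
                rw [mul_one]
                exact mul_le_mul_of_nonneg_right (hv i) (nrm_nonneg _)
      _ = r * α * nrm x := by simp [Finset.sum_const, mul_assoc]
  · refine Finset.sum_nonneg fun j _ => ?_
    have h1 : dotp (W j) x * Real.sign (dotp (ws (P j)) x) ≤ |dotp (W j) x| := by
      calc dotp (W j) x * Real.sign (dotp (ws (P j)) x)
          ≤ |dotp (W j) x * Real.sign (dotp (ws (P j)) x)| := le_abs_self _
        _ = |dotp (W j) x| * |Real.sign (dotp (ws (P j)) x)| := abs_mul _ _
        _ ≤ |dotp (W j) x| * 1 :=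
            mul_le_mul_of_nonneg_left (sign_abs_le _) (abs_nonneg _)
        _ = |dotp (W j) x| := mul_one _
    have h2 : 0 ≤ dotp (W j) x *
        (Real.sign (dotp (W j) x) - Real.sign (dotp (ws (P j)) x)) := by
      have := mul_sign_self (dotp (W j) x)
      nlinarith
    calc (0:ℝ) = nrm (W j) * 0 := by ring
      _ ≤ nrm (W j) * (dotp (W j) x *
          (Real.sign (dotp (W j) x) - Real.sign (dotp (ws (P j)) x))) :=
          mul_le_mul_of_nonneg_left h2 (nrm_nonneg _)
      _ = nrm (W j) * dotp (W j) x *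
          (Real.sign (dotp (W j) x) - Real.sign (dotp (ws (P j)) x)) := by ring
  · have key : (∑ i, dotp (v i) x * Real.sign (dotp (ws i) x)) =
        (∑ j, nrm (W j) * dotp (W j) x * Real.sign (dotp (ws (P j)) x)) - fStar ws x := by
      have fib : ∑ i : Fin r, ∑ j ∈ Finset.univ.filter (fun j => P j = i),
          (nrm (W j) * dotp (W j) x * Real.sign (dotp (ws (P j)) x)) =
          ∑ j, nrm (W j) * dotp (W j) x * Real.sign (dotp (ws (P j)) x) :=
        Finset.sum_fiberwise _ _ _
      calc (∑ i, dotp (v i) x * Real.sign (dotp (ws i) x))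
          = ∑ i, ((∑ j ∈ Finset.univ.filter (fun j => P j = i),
                nrm (W j) * dotp (W j) x * Real.sign (dotp (ws i) x))
              - dotp (ws i) x * Real.sign (dotp (ws i) x)) := by
            refine Finset.sum_congr rfl fun i _ => ?_
            rw [hdv i, sub_mul, Finset.sum_mul]
        _ = (∑ i, ∑ j ∈ Finset.univ.filter (fun j => P j = i),
              nrm (W j) * dotp (W j) x * Real.sign (dotp (ws (P j)) x))
            - ∑ i, |dotp (ws i) x| := by
            rw [Finset.sum_sub_distrib]
            congr 1
            · refine Finset.sum_congr rfl fun i _ => Finset.sum_congr rfl fun j hj => ?_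
              rw [Finset.mem_filter] at hj
              rw [hj.2]
            · exact Finset.sum_congr rfl fun i _ => mul_sign_self _
        _ = (∑ j, nrm (W j) * dotp (W j) x * Real.sign (dotp (ws (P j)) x)) - fStar ws x := by
            rw [fib]; rfl
    rw [key]
    have expand : (∑ j, nrm (W j) * dotp (W j) x *
        (Real.sign (dotp (W j) x) - Real.sign (dotp (ws (P j)) x))) =
        fStu W x - ∑ j, nrm (W j) * dotp (W j) x * Real.sign (dotp (ws (P j)) x) := by
      rw [fStu, ← Finset.sum_sub_distrib]
      refine Finset.sum_congr rfl fun j _ => ?_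
      have := mul_sign_self (dotp (W j) x)
      linear_combination nrm (W j) * this
    rw [expand]; ring
end
end
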